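/- arXiv:2511.05201 — 6 statements merged into one kernel-verified Lean document; each statement's English description precedes it below -/
import Mathlib

section
/- Let K₀ ⊆ L₀ be a finite separable field extension, and let K = K₀((t)), L = L₀((t)) be the corresponding Laurent series fields. Then every element of 1 + t·K₀[[t]] (i.e., every formal power series with constant term 1, viewed in K) is the norm of an element of L under the field norm N_{L/K}. -/
open PowerSeries

noncomputable section

variable {K₀ L₀ : Type*} [Field K₀] [Field L₀] [Algebra K₀ L₀]
  {ι : Type*} [Fintype ι] [DecidableEq ι]

/-- The coefficientwise left-multiplication-matrix ring hom from power series over `L₀`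
to matrices of power series over `K₀`. -/
def MmatAux (b : Module.Basis ι K₀ L₀) : PowerSeries L₀ →+* Matrix ι ι (PowerSeries K₀) where
  toFun g := Matrix.of fun i j => PowerSeries.mk fun m =>
    Algebra.leftMulMatrix b ((PowerSeries.coeff m) g) i j
  map_one' := by
    ext i j m
    simp only [Matrix.of_apply, PowerSeries.coeff_mk, PowerSeries.coeff_one]
    rcases eq_or_ne m 0 with rfl | hm
    · simp [Matrix.one_apply, PowerSeries.coeff_one, apply_ite (PowerSeries.coeff 0)]
    · simp [hm, Matrix.one_apply, PowerSeries.coeff_one,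
        apply_ite (PowerSeries.coeff m)]
  map_mul' g h := by
    ext i j m
    simp only [Matrix.of_apply, PowerSeries.coeff_mk]
    have lhs : Algebra.leftMulMatrix b (PowerSeries.coeff m (g * h)) i j
        = ∑ p ∈ Finset.HasAntidiagonal.antidiagonal m, ∑ k,
            Algebra.leftMulMatrix b (PowerSeries.coeff p.1 g) i k *
            Algebra.leftMulMatrix b (PowerSeries.coeff p.2 h) k j := by
      rw [PowerSeries.coeff_mul, map_sum, Matrix.sum_apply]
      exact Finset.sum_congr rfl fun p _ => by rw [map_mul, Matrix.mul_apply]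
    rw [lhs, Matrix.mul_apply, map_sum, Finset.sum_comm]
    refine Finset.sum_congr rfl fun p _ => ?_
    rw [PowerSeries.coeff_mul]
    exact Finset.sum_congr rfl fun k _ => by simp [PowerSeries.coeff_mk]
  map_zero' := by
    ext i j m
    simp
  map_add' g h := by
    ext i j m
    simp [Matrix.add_apply]

lemma MmatAux_apply (b : Module.Basis ι K₀ L₀) (g : PowerSeries L₀) (i j : ι) (m : ℕ) :
    PowerSeries.coeff m (MmatAux b g i j) =
      Algebra.leftMulMatrix b (PowerSeries.coeff m g) i j := by
  simp [MmatAux, PowerSeries.coeff_mk]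

lemma X_pow_dvd_det_sub (b : Module.Basis ι K₀ L₀) (k : ℕ) {g g' : PowerSeries L₀}
    (h : (X : PowerSeries L₀) ^ k ∣ g - g') :
    (X : PowerSeries K₀) ^ k ∣ (MmatAux b g).det - (MmatAux b g').det := by
  set I : Ideal (PowerSeries K₀) := Ideal.span {(X : PowerSeries K₀) ^ k}
  have hmat : (Ideal.Quotient.mk I).mapMatrix (MmatAux b g)
      = (Ideal.Quotient.mk I).mapMatrix (MmatAux b g') := by
    ext i j
    simp only [RingHom.mapMatrix_apply, Matrix.map_apply]
    rw [Ideal.Quotient.mk_eq_mk_iff_sub_mem]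
    rw [Ideal.mem_span_singleton]
    have : MmatAux b g i j - MmatAux b g' i j = (MmatAux b (g - g')) i j := by
      rw [map_sub, Matrix.sub_apply]
    rw [this, PowerSeries.X_pow_dvd_iff]
    intro m hm
    rw [MmatAux_apply]
    rw [PowerSeries.X_pow_dvd_iff] at h
    rw [h m hm]
    simp
  have := congrArg Matrix.det hmat
  rw [← RingHom.map_det, ← RingHom.map_det] at this
  rw [← Ideal.mem_span_singleton]
  exact (Ideal.Quotient.mk_eq_mk_iff_sub_mem _ _).mp this

lemma det_MmatAux_one_add_monomial (b : Module.Basis ι K₀ L₀) (c : L₀) (k : ℕ) :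
    ∃ s : PowerSeries K₀,
      (MmatAux b (1 + PowerSeries.monomial k c)).det
        = 1 + PowerSeries.C (Algebra.trace K₀ L₀ c) * X ^ k + s * (X ^ k) ^ 2 := by
  have hXC : ∀ (m : ℕ) (r : K₀),
      PowerSeries.coeff m ((X : PowerSeries K₀) ^ k * PowerSeries.C r)
        = if m = k then r else 0 := by
    intro m r
    rw [PowerSeries.coeff_X_pow_mul', PowerSeries.coeff_C]
    rcases eq_or_ne m k with rfl | h
    · simp
    · by_cases hk : k ≤ m
      · rw [if_pos hk, if_neg (by omega), if_neg h]
      · rw [if_neg hk, if_neg h]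
  have hA : ∀ (i j : ι) (m : ℕ),
      PowerSeries.coeff m ((1 : Matrix ι ι (PowerSeries K₀)) i j)
        = Algebra.leftMulMatrix b (PowerSeries.coeff m 1) i j := by
    intro i j m
    rcases eq_or_ne i j with rfl | h
    · simp [Matrix.one_apply, PowerSeries.coeff_one,
        apply_ite (fun y : L₀ => Algebra.leftMulMatrix b y i i)]
    · simp [Matrix.one_apply_ne h, PowerSeries.coeff_one,
        apply_ite (fun y : L₀ => Algebra.leftMulMatrix b y i j), Matrix.one_apply_ne h]
  have hM : MmatAux b (1 + PowerSeries.monomial k c)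
      = 1 + ((X : PowerSeries K₀) ^ k) • (Algebra.leftMulMatrix b c).map PowerSeries.C := by
    ext i j m
    rw [MmatAux_apply]
    simp only [map_add, Matrix.add_apply, Matrix.smul_apply, Matrix.map_apply, smul_eq_mul,
      PowerSeries.coeff_monomial, hXC, hA i j m,
      apply_ite (fun y : L₀ => Algebra.leftMulMatrix b y i j), map_zero, Matrix.zero_apply]
  have htr : Matrix.trace ((Algebra.leftMulMatrix b c).map PowerSeries.C)
      = PowerSeries.C (Algebra.trace K₀ L₀ c) := by
    rw [Algebra.trace_eq_matrix_trace b]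
    simp [Matrix.trace, Matrix.diag, map_sum]
  rw [hM, Matrix.det_one_add_smul, htr]
  refine ⟨Polynomial.eval ((X : PowerSeries K₀) ^ k)
    (1 + Polynomial.X • (((Algebra.leftMulMatrix b) c).map
      PowerSeries.C).map Polynomial.C).det.divX.divX, by ring⟩

lemma exists_powerSeries_det_eq [FiniteDimensional K₀ L₀] [Algebra.IsSeparable K₀ L₀]
    (b : Module.Basis ι K₀ L₀) (f : PowerSeries K₀) (hf : PowerSeries.constantCoeff f = 1) :
    ∃ g : PowerSeries L₀, (MmatAux b g).det = f := by
  obtain ⟨e, he⟩ := Algebra.trace_surjective K₀ L₀ 1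
  let G : ℕ → PowerSeries L₀ := fun k => Nat.rec (motive := fun _ => PowerSeries L₀) 1
    (fun k Gk => Gk * (1 + PowerSeries.monomial k
      ((- PowerSeries.coeff k ((MmatAux b Gk).det - f)) • e))) k
  have hG0 : G 0 = 1 := rfl
  have hGs : ∀ k, G (k+1) = G k * (1 + PowerSeries.monomial k
      ((- PowerSeries.coeff k ((MmatAux b (G k)).det - f)) • e)) := fun k => rfl
  have inv : ∀ k, (X : PowerSeries K₀) ^ k ∣ (MmatAux b (G k)).det - f := by
    intro k
    induction k with
    | zero => simp
    | succ k ih =>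
      rcases Nat.eq_zero_or_pos k with rfl | hk
      · have hc : PowerSeries.coeff 0 ((MmatAux b (1 : PowerSeries L₀)).det - f) = 0 := by
          simp [map_one, PowerSeries.coeff_zero_eq_constantCoeff, hf]
        rw [hGs 0, hG0, hc]
        simp only [neg_zero, zero_smul, map_zero, add_zero, mul_one, one_mul, map_one,
          Matrix.det_one]
        rw [PowerSeries.X_pow_dvd_iff]
        intro m hm
        have hm0 : m = 0 := by omega
        subst hm0
        simp [PowerSeries.coeff_zero_eq_constantCoeff, hf]
      · set c : K₀ := PowerSeries.coeff k ((MmatAux b (G k)).det - f) with hcdef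
        obtain ⟨s, hs⟩ := det_MmatAux_one_add_monomial b ((-c) • e) k
        have htrc : Algebra.trace K₀ L₀ ((-c) • e) = -c := by
          rw [map_smul, he, smul_eq_mul, mul_one]
        rw [htrc] at hs
        have hdet : (MmatAux b (G (k+1))).det = (MmatAux b (G k)).det *
            ((1 : PowerSeries K₀) + PowerSeries.C (-c) * X ^ k + s * (X ^ k) ^ 2) := by
          rw [hGs k, map_mul, Matrix.det_mul, hs]
        obtain ⟨h', hh'⟩ := ih
        have hDk : (MmatAux b (G k)).det = X ^ k * h' + f := by
          rw [← hh']; ring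
        have hc0 : PowerSeries.constantCoeff h' = c := by
          have h1 := congrArg (PowerSeries.coeff k) hh'
          rw [← hcdef] at h1
          have h2 : PowerSeries.coeff k ((X : PowerSeries K₀) ^ k * h')
              = PowerSeries.coeff 0 h' := by
            have := PowerSeries.coeff_X_pow_mul h' k 0
            simpa using this
          rw [h2, PowerSeries.coeff_zero_eq_constantCoeff] at h1
          exact h1.symm
        have key : (MmatAux b (G (k+1))).det - f
            = X ^ k * (f * PowerSeries.C (-c)
                + h' * ((1 : PowerSeries K₀) + PowerSeries.C (-c) * X ^ k + s * (X ^ k) ^ 2))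
              + f * s * (X ^ k) ^ 2 := by
          rw [hdet, hDk]; ring
        rw [key]
        refine dvd_add ?_ ?_
        · rw [pow_succ]
          refine mul_dvd_mul_left _ ?_
          rw [PowerSeries.X_dvd_iff]
          simp only [map_add, map_mul, map_one, map_pow, PowerSeries.constantCoeff_X,
            PowerSeries.constantCoeff_C, hf, hc0, zero_pow hk.ne', one_mul, mul_zero, add_zero,
            zero_pow (two_ne_zero), mul_one]
          ring
        · refine Dvd.dvd.mul_left ?_ _
          rw [← pow_mul]
          exact pow_dvd_pow _ (by omega)
  have stab : ∀ k m, m < k →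
      PowerSeries.coeff m (G k) = PowerSeries.coeff m (G (m+1)) := by
    intro k
    induction k with
    | zero => exact fun m hm => absurd hm (Nat.not_lt_zero m)
    | succ k ih =>
      intro m hm
      rcases Nat.lt_succ_iff_lt_or_eq.mp hm with h | rfl
      · rw [← ih m h]
        have hdvd : (X : PowerSeries L₀) ^ k ∣ G (k+1) - G k := by
          rw [hGs k]
          have : G k * (1 + PowerSeries.monomial k
                ((- PowerSeries.coeff k ((MmatAux b (G k)).det - f)) • e)) - G k
              = G k * PowerSeries.monomial k
                ((- PowerSeries.coeff k ((MmatAux b (G k)).det - f)) • e) := by ring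
          rw [this]
          refine Dvd.dvd.mul_left ?_ _
          rw [PowerSeries.X_pow_dvd_iff]
          intro q hq
          rw [PowerSeries.coeff_monomial, if_neg (by omega)]
        rw [PowerSeries.X_pow_dvd_iff] at hdvd
        have := hdvd m h
        rw [map_sub, sub_eq_zero] at this
        exact this
      · rfl
  refine ⟨PowerSeries.mk fun m => PowerSeries.coeff m (G (m+1)), ?_⟩
  set g : PowerSeries L₀ := PowerSeries.mk fun m => PowerSeries.coeff m (G (m+1)) with hgdef
  have hgk : ∀ k, (X : PowerSeries L₀) ^ k ∣ g - G k := by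
    intro k
    rw [PowerSeries.X_pow_dvd_iff]
    intro m hm
    rw [map_sub, hgdef, PowerSeries.coeff_mk, stab k m hm, sub_self]
  ext m
  have h1 := X_pow_dvd_det_sub b (m+1) (hgk (m+1))
  have h2 := inv (m+1)
  have h3 : (X : PowerSeries K₀) ^ (m+1) ∣ (MmatAux b g).det - f := by
    have := dvd_add h1 h2
    simpa using this
  rw [PowerSeries.X_pow_dvd_iff] at h3
  have := h3 m (Nat.lt_succ_self m)
  rw [map_sub, sub_eq_zero] at this
  exact this

end

noncomputable section Bridge

variable {K₀ L₀ : Type*} [Field K₀] [Field L₀] [Algebra K₀ L₀]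

lemma single_mul_coeff {R : Type*} [Semiring R] (d : ℤ) (z : LaurentSeries R) (m : ℤ) :
    ((HahnSeries.single d 1 : LaurentSeries R) * z).coeff m = z.coeff (m - d) := by
  have h := HahnSeries.coeff_single_mul_add (r := (1 : R)) (x := z) (a := m - d) (b := d)
  rw [sub_add_cancel] at h
  rw [h, one_mul]

lemma sigma_coeff (σ : LaurentSeries K₀ →+* LaurentSeries L₀)
    (hσ : ∀ f : PowerSeries K₀,
      σ (f : LaurentSeries K₀) = ((PowerSeries.map (algebraMap K₀ L₀) f : PowerSeries L₀) :
        LaurentSeries L₀))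
    (x : LaurentSeries K₀) (m : ℤ) :
    (σ x).coeff m = algebraMap K₀ L₀ (x.coeff m) := by
  have hσX : σ (HahnSeries.single (1:ℤ) 1) = HahnSeries.single (1:ℤ) 1 := by
    rw [← PowerSeries.coe_X, hσ, PowerSeries.map_X, PowerSeries.coe_X]
  have hσsingle : ∀ d : ℤ, σ (HahnSeries.single d (1 : K₀)) = HahnSeries.single d 1 := by
    intro d
    rw [RatFunc.single_zpow, map_zpow₀, hσX, ← RatFunc.single_zpow]
  conv_lhs => rw [← LaurentSeries.single_order_mul_powerSeriesPart x]
  conv_rhs => rw [← LaurentSeries.single_order_mul_powerSeriesPart x]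
  rw [map_mul, hσsingle, hσ,
    single_mul_coeff, single_mul_coeff, PowerSeries.coeff_coe, PowerSeries.coeff_coe]
  split_ifs with h
  · simp
  · rw [PowerSeries.coeff_map]

lemma coeff_finsum {R : Type*} [Semiring R] {α : Type*} (sfin : Finset α)
    (z : α → LaurentSeries R) (m : ℤ) :
    (∑ i ∈ sfin, z i).coeff m = ∑ i ∈ sfin, (z i).coeff m :=
  map_sum (HahnSeries.coeff.addMonoidHom m) _ _

lemma norm_coe_eq {K₀ L₀ : Type*} [Field K₀] [Field L₀] [Algebra K₀ L₀]
    {ι : Type*} [Fintype ι] [DecidableEq ι] (b : Module.Basis ι K₀ L₀)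
    (σ : LaurentSeries K₀ →+* LaurentSeries L₀)
    (hσ : ∀ f : PowerSeries K₀,
      σ (f : LaurentSeries K₀) = ((PowerSeries.map (algebraMap K₀ L₀) f : PowerSeries L₀) :
        LaurentSeries L₀))
    (g : PowerSeries L₀) :
    @Algebra.norm (LaurentSeries K₀) (LaurentSeries L₀) _ _ σ.toAlgebra
        ((g : LaurentSeries L₀))
      = ((MmatAux b g).det : LaurentSeries K₀) := by
  letI : Algebra (LaurentSeries K₀) (LaurentSeries L₀) := σ.toAlgebra
  classical
  have hσc := sigma_coeff σ hσ
  have hsmul : ∀ (a : LaurentSeries K₀) (y : LaurentSeries L₀), a • y = σ a * y := by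
    intro a y
    rw [Algebra.smul_def, RingHom.algebraMap_toAlgebra]
  set E : LaurentSeries L₀ → ι → LaurentSeries K₀ :=
    fun x i => x.map (b.coord i) with hEdef
  have hEcoeff : ∀ (x : LaurentSeries L₀) (i : ι) (m : ℤ),
      (E x i).coeff m = b.repr (x.coeff m) i := by
    intro x i m
    rw [hEdef, HahnSeries.map_coeff, Module.Basis.coord_apply]
  have hEadd : ∀ x y, E (x + y) = E x + E y := by
    intro x y
    funext i
    ext m
    rw [Pi.add_apply, HahnSeries.coeff_add, hEcoeff, hEcoeff, hEcoeff,
      HahnSeries.coeff_add, map_add]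
    rfl
  have hEsmul : ∀ (a : LaurentSeries K₀) (x : LaurentSeries L₀), E (a • x) = a • E x := by
    intro a x
    funext i
    ext m
    rw [Pi.smul_apply, hsmul, hEcoeff, smul_eq_mul]
    have hsub : (σ a).support ⊆ a.support := by
      intro p hp
      simp only [HahnSeries.mem_support] at hp ⊢
      intro h0
      exact hp (by rw [hσc, h0, map_zero])
    have hsubE : (E x i).support ⊆ x.support := by
      intro p hp
      simp only [HahnSeries.mem_support] at hp ⊢
      intro h0
      exact hp (by rw [hEcoeff, h0, map_zero, Finsupp.coe_zero, Pi.zero_apply])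
    rw [HahnSeries.coeff_mul_left' a.isPWO_support hsub,
      HahnSeries.coeff_mul_right' x.isPWO_support hsubE, map_sum, Finsupp.finset_sum_apply]
    refine Finset.sum_congr rfl fun p _ => ?_
    rw [hσc, ← Algebra.smul_def, map_smul, Finsupp.smul_apply, smul_eq_mul, hEcoeff]
  set F : (ι → LaurentSeries K₀) → LaurentSeries L₀ :=
    fun c => ∑ i, σ (c i) * HahnSeries.C (b i) with hFdef
  have hFcoeff : ∀ (c : ι → LaurentSeries K₀) (m : ℤ),
      (F c).coeff m = ∑ i, ((c i).coeff m) • b i := by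
    intro c m
    rw [hFdef, coeff_finsum]
    refine Finset.sum_congr rfl fun i _ => ?_
    rw [HahnSeries.C_apply, HahnSeries.coeff_mul_single_zero, hσc, ← Algebra.smul_def]
  have hleft : ∀ x, F (E x) = x := by
    intro x
    ext m
    rw [hFcoeff]
    simp only [hEcoeff]
    exact Module.Basis.sum_repr b (x.coeff m)
  have hright : ∀ c, E (F c) = c := by
    intro c
    funext i
    ext m
    rw [hEcoeff, hFcoeff, map_sum, Finsupp.finset_sum_apply]
    simp [Module.Basis.repr_self, Finsupp.single_apply, Finsupp.smul_apply]
  set eLin : LaurentSeries L₀ ≃ₗ[LaurentSeries K₀] (ι → LaurentSeries K₀) :=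
    { toFun := E, map_add' := hEadd, map_smul' := hEsmul,
      invFun := F, left_inv := hleft, right_inv := hright } with heLin
  have heLinApp : ∀ x, eLin x = E x := fun _ => rfl
  set B : Module.Basis ι (LaurentSeries K₀) (LaurentSeries L₀) := Module.Basis.ofEquivFun eLin with hBdef
  have hBrepr : ∀ (x : LaurentSeries L₀) (i : ι), B.repr x i = E x i := by
    intro x i
    rw [hBdef, Module.Basis.ofEquivFun_repr_apply, heLinApp]
  have hBj : ∀ j, B j = HahnSeries.C (b j) := by
    intro j
    have h1 : eLin (HahnSeries.C (b j)) = Pi.single j 1 := by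
      rw [heLinApp]
      funext i
      ext m
      rw [hEcoeff, HahnSeries.C_apply, HahnSeries.coeff_single]
      rcases eq_or_ne i j with rfl | hij
      · simp [Module.Basis.repr_self, Pi.single_apply, HahnSeries.coeff_one,
          apply_ite (fun y : L₀ => b.repr y i), Finsupp.single_apply]
      · simp [Module.Basis.repr_self, Pi.single_apply, hij, Ne.symm hij, HahnSeries.coeff_one,
          apply_ite (fun y : L₀ => b.repr y i), Finsupp.single_apply]
    have h2 : B j = eLin.symm (Pi.single j 1) := by
      rw [hBdef]
      exact congrFun (Module.Basis.coe_ofEquivFun eLin) j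
    rw [h2, ← h1, LinearEquiv.symm_apply_apply]
  have hLMM : Algebra.leftMulMatrix B (g : LaurentSeries L₀)
      = (MmatAux b g).map (HahnSeries.ofPowerSeries ℤ K₀) := by
    ext i j m
    rw [Matrix.map_apply, Algebra.leftMulMatrix_eq_repr_mul, hBj, hBrepr]
    rw [hEcoeff, HahnSeries.C_apply, HahnSeries.coeff_mul_single_zero,
      PowerSeries.coeff_coe, PowerSeries.coeff_coe]
    split_ifs with h
    · simp
    · rw [MmatAux_apply, Algebra.leftMulMatrix_eq_repr_mul]
  rw [Algebra.norm_eq_matrix_det B, hLMM]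
  rw [show (MmatAux b g).map (HahnSeries.ofPowerSeries ℤ K₀)
      = (HahnSeries.ofPowerSeries ℤ K₀).mapMatrix (MmatAux b g) from rfl, ← RingHom.map_det]

end Bridge



/-- Let `K₀ ⊆ L₀` be a finite separable field extension, and let
`K = K₀((t))`, `L = L₀((t))` be the corresponding Laurent series fields, with `L` regarded
as a `K`-algebra via the coefficientwise embedding `σ` (i.e. `σ` restricts on power series
to `PowerSeries.map (algebraMap K₀ L₀)`).  Then every element of `1 + t·K₀[[t]]`, i.e. every
power series with constant coefficient `1` viewed in `K`, is the norm `N_{L/K}` of an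
element of `L`. -/
theorem one_add_t_mul_powerSeries_is_norm
    (K₀ L₀ : Type*) [Field K₀] [Field L₀] [Algebra K₀ L₀]
    [FiniteDimensional K₀ L₀] [Algebra.IsSeparable K₀ L₀]
    (σ : LaurentSeries K₀ →+* LaurentSeries L₀)
    (hσ : ∀ f : PowerSeries K₀,
      σ (f : LaurentSeries K₀) = ((PowerSeries.map (algebraMap K₀ L₀) f : PowerSeries L₀) :
        LaurentSeries L₀)) :
    letI : Algebra (LaurentSeries K₀) (LaurentSeries L₀) := σ.toAlgebra
    ∀ f : PowerSeries K₀, PowerSeries.constantCoeff f = 1 →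
      ∃ g : LaurentSeries L₀,
        Algebra.norm (LaurentSeries K₀) g = (f : LaurentSeries K₀) := by
  intro f hf
  obtain ⟨g, hg⟩ := exists_powerSeries_det_eq (Module.finBasis K₀ L₀) f hf
  refine ⟨(g : LaurentSeries L₀), ?_⟩
  have h := norm_coe_eq (Module.finBasis K₀ L₀) σ hσ g
  rw [hg] at h
  exact h
end

section
/- Let K be a field of characteristic p > 0 with [K : K^p] = p, and let L/K be a finite purely inseparable extension. Then the field norm N_{L/K} : Lˣ → Kˣ is surjective. -/
open Polynomial Module

variable {p : ℕ} [Fact p.Prime]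

/-- Range-restriction equivalence of an injective field hom. -/
noncomputable def fieldRangeEquiv {K L : Type*} [Field K] [Field L] (f : K →+* L) :
    K ≃+* f.fieldRange :=
  RingEquiv.ofBijective f.rangeRestrictField
    ⟨fun a b h => f.injective (congrArg Subtype.val h),
     fun y => by
      obtain ⟨x, hx⟩ := RingHom.mem_fieldRange.1 y.2
      exact ⟨x, Subtype.ext hx⟩⟩

@[simp] lemma fieldRangeEquiv_apply_coe {K L : Type*} [Field K] [Field L] (f : K →+* L) (x : K) :
    (fieldRangeEquiv f x : L) = f x := rfl

lemma mem_frobRange_iff {K : Type*} [Field K] [CharP K p] {x : K} :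
    x ∈ (frobenius K p).fieldRange ↔ ∃ d : K, d ^ p = x := by
  simp [RingHom.mem_fieldRange, frobenius_def]

lemma hdeg_transfer {K K₂ : Type*} [Field K] [Field K₂] [CharP K p] [CharP K₂ p]
    (j : K ≃+* K₂) (h : finrank (frobenius K p).fieldRange K = p) :
    finrank (frobenius K₂ p).fieldRange K₂ = p := by
  set F := (frobenius K p).fieldRange
  set F₂ := (frobenius K₂ p).fieldRange
  have hmem : ∀ x : F, (j x : K₂) ∈ F₂ := by
    rintro ⟨x, hx⟩
    obtain ⟨d, hd⟩ := mem_frobRange_iff.1 hx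
    exact mem_frobRange_iff.2 ⟨j d, by simp [← hd]⟩
  let f : F →+* F₂ := (j.toRingHom.comp F.subtype).codRestrict F₂.toSubring hmem
  have hbij : Function.Bijective f := by
    constructor
    · intro a b hab
      exact Subtype.ext (j.injective (congrArg Subtype.val hab))
    · rintro ⟨y, hy⟩
      obtain ⟨d, hd⟩ := mem_frobRange_iff.1 hy
      refine ⟨⟨(j.symm d) ^ p, mem_frobRange_iff.2 ⟨j.symm d, rfl⟩⟩, Subtype.ext ?_⟩
      show j ((j.symm d) ^ p) = y
      simp [← hd]
  have hc : (algebraMap F₂ K₂).comp (RingEquiv.ofBijective f hbij).toRingHom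
      = j.toRingHom.comp (algebraMap F K) := by ext a; rfl
  have hr := Algebra.lift_rank_eq_of_equiv_equiv (RingEquiv.ofBijective f hbij) j hc
  have h2 : finrank F₂ K₂ = finrank F K := by
    unfold Module.finrank
    conv_lhs => rw [← Cardinal.toNat_lift.{u_1} (Module.rank F₂ K₂)]
    rw [← hr, Cardinal.toNat_lift]
  exact h2.trans h

set_option synthInstance.maxHeartbeats 1000000 in
set_option maxHeartbeats 2000000 in
lemma exists_eval₂_frobenius {K : Type*} [Field K] [CharP K p]
    (hdeg : finrank (frobenius K p).fieldRange K = p)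
    (c x : K) (hc : ∀ d : K, d ^ p ≠ c) :
    ∃ g : Polynomial K, eval₂ (frobenius K p) c g = x := by
  have hp : p.Prime := Fact.out
  set F := (frobenius K p).fieldRange with hF
  haveI : FiniteDimensional F K := .of_finrank_pos (by rw [hdeg]; exact hp.pos)
  have hcF : c ∉ F := fun h => by
    obtain ⟨d, hd⟩ := mem_frobRange_iff.1 h; exact hc d hd
  have hcp : c ^ p ∈ F := mem_frobRange_iff.2 ⟨c, rfl⟩
  set M := IntermediateField.adjoin F ({c} : Set K) with hMdef
  have hcM : c ∈ M := IntermediateField.mem_adjoin_simple_self F c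
  have h1 : finrank F M * finrank M K = p := by
    rw [Module.finrank_mul_finrank, hdeg]
  have h2 : finrank F M ≠ 1 := by
    intro h1'
    have hbot := IntermediateField.finrank_eq_one_iff.1 h1'
    rw [hbot, IntermediateField.mem_bot] at hcM
    obtain ⟨y, hy⟩ := hcM
    exact hcF (hy ▸ y.2)
  have h3 : finrank M K = 1 := by
    rcases (hp.eq_one_or_self_of_dvd (finrank M K) ⟨finrank F M, by rw [← h1]; ring⟩) with h | h
    · exact h
    · exfalso
      apply h2
      have hpos : 0 < finrank M K := finrank_pos
      nlinarith [h1, hp.two_le]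
  have hMtop : ∀ z : K, z ∈ M := by
    intro z
    have hb : (⊥ : Subalgebra M K) = ⊤ := Subalgebra.bot_eq_top_of_finrank_eq_one h3
    have : z ∈ (⊥ : Subalgebra M K) := by rw [hb]; trivial
    rw [Algebra.mem_bot] at this
    obtain ⟨m, hm⟩ := this
    exact hm ▸ m.2
  -- x ∈ adjoin, c integral over F
  have hci : IsIntegral F c := by
    refine ⟨X ^ p - C (⟨c ^ p, hcp⟩ : F), ?_, ?_⟩
    · exact Polynomial.monic_X_pow_sub_C _ hp.pos.ne'
    · simp only [Polynomial.eval₂_sub, Polynomial.eval₂_pow, Polynomial.eval₂_X,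
        Polynomial.eval₂_C]
      exact sub_eq_zero_of_eq rfl
  have hxadj : x ∈ Algebra.adjoin F ({c} : Set K) := by
    have hx' : x ∈ (IntermediateField.adjoin F ({c} : Set K)).toSubalgebra := hMtop x
    rwa [IntermediateField.adjoin_simple_toSubalgebra_of_isAlgebraic hci.isAlgebraic] at hx'
  rw [Algebra.adjoin_singleton_eq_range_aeval] at hxadj
  obtain ⟨f, hf⟩ := hxadj
  -- convert f : F[X] to K[X] via p-th root map
  let ρ : F →+* K := ((fieldRangeEquiv (frobenius K p)).symm : F →+* K)
  have hρ : (frobenius K p).comp ρ = F.subtype := by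
    ext a
    show frobenius K p ((fieldRangeEquiv (frobenius K p)).symm a) = ↑a
    conv_rhs => rw [← RingEquiv.apply_symm_apply (fieldRangeEquiv (frobenius K p)) a]
    rfl
  refine ⟨f.map ρ, ?_⟩
  rw [Polynomial.eval₂_map, hρ]
  rw [← hf]
  rfl

lemma finrank_adjoin_of_pow {K L : Type*} [Field K] [Field L] [CharP K p] [Algebra K L]
    [IsPurelyInseparable K L] {b : L} {c : K}
    (hb : b ∉ Set.range (algebraMap K L)) (hbp : b ^ p = algebraMap K L c) :
    finrank K (IntermediateField.adjoin K ({b} : Set L)) = p := by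
  have hp : p.Prime := Fact.out
  obtain ⟨n, y, hmin⟩ := IsPurelyInseparable.minpoly_eq_X_pow_sub_C K p b
  have hbint : IsIntegral K b := IsPurelyInseparable.isIntegral' K b
  have hfr : finrank K (IntermediateField.adjoin K ({b} : Set L)) = (minpoly K b).natDegree :=
    IntermediateField.adjoin.finrank hbint
  have hnd : (minpoly K b).natDegree = p ^ n := by
    rw [hmin, Polynomial.natDegree_X_pow_sub_C]
  have hn0 : n ≠ 0 := by
    intro h
    subst h
    rw [pow_zero, pow_one] at hmin
    have : b = algebraMap K L y := by
      have := minpoly.aeval K b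
      rw [hmin] at this
      simpa [sub_eq_zero] using this
    exact hb ⟨y, this.symm⟩
  have hdvd : minpoly K b ∣ X ^ p - C c := by
    apply minpoly.dvd
    simp [hbp]
  have hle : (minpoly K b).natDegree ≤ p := by
    have := Polynomial.natDegree_le_of_dvd hdvd (by
      intro h
      have := congrArg (Polynomial.natDegree) h
      simp [Polynomial.natDegree_X_pow_sub_C] at this
      exact hp.ne_zero this)
    simpa [Polynomial.natDegree_X_pow_sub_C] using this
  have : p ^ n = p := le_antisymm (hnd ▸ hle) (by
    calc p = p ^ 1 := (pow_one p).symm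
    _ ≤ p ^ n := Nat.pow_le_pow_right hp.pos (Nat.one_le_iff_ne_zero.2 hn0))
  rw [hfr, hnd, this]

universe u

set_option synthInstance.maxHeartbeats 1000000 in
set_option maxHeartbeats 4000000 in
lemma aux_induction : ∀ (d : ℕ) (K L : Type u) [Field K] [Field L] [CharP K p]
    [Algebra K L] [FiniteDimensional K L] [IsPurelyInseparable K L],
    finrank (frobenius K p).fieldRange K = p → finrank K L = d →
    ∃ n : ℕ, d = p ^ n ∧ ∀ x : K, ∃ y : L, y ^ p ^ n = algebraMap K L x := by
  intro d
  induction d using Nat.strong_induction_on with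
  | _ d IH =>
  intro K L _ _ _ _ _ _ hdeg hd
  have hp : p.Prime := Fact.out
  haveI : CharP L p := charP_of_injective_algebraMap (algebraMap K L).injective p
  by_cases hsurj : Function.Surjective (algebraMap K L)
  · refine ⟨0, ?_, fun x => ⟨algebraMap K L x, by simp⟩⟩
    have hbot : (⊥ : Subalgebra K L) = ⊤ := by
      rw [eq_top_iff]
      intro z _
      exact Algebra.mem_bot.2 (hsurj z)
    rw [← hd, pow_zero]
    exact Subalgebra.bot_eq_top_iff_finrank_eq_one.1 hbot
  · -- there is an element not in the image
    rw [Function.Surjective] at hsurj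
    push_neg at hsurj
    obtain ⟨a, ha⟩ := hsurj
    classical
    have hex : ∃ m : ℕ, a ^ p ^ m ∈ (algebraMap K L).range := IsPurelyInseparable.pow_mem K p a
    set k := Nat.find hex with hk
    have hk0 : k ≠ 0 := by
      intro h
      have := Nat.find_spec hex
      rw [← hk, h] at this
      simp only [pow_zero, pow_one] at this
      obtain ⟨w, hw⟩ := this
      exact ha w hw
    set b := a ^ p ^ (k - 1) with hbdef
    have hbnot : b ∉ Set.range (algebraMap K L) := by
      intro ⟨w, hw⟩
      exact Nat.find_min hex (Nat.sub_lt (Nat.pos_of_ne_zero hk0) one_pos) ⟨w, hw⟩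
    have hbp' : b ^ p ∈ (algebraMap K L).range := by
      have : b ^ p = a ^ p ^ k := by
        rw [hbdef, ← pow_mul, ← pow_succ, Nat.sub_add_cancel (Nat.pos_of_ne_zero hk0)]
      rw [this]
      exact Nat.find_spec hex
    obtain ⟨c, hc⟩ := hbp'
    -- hc : algebraMap K L c = b ^ p
    set K' := IntermediateField.adjoin K ({b} : Set L) with hK'def
    haveI : CharP K' p := charP_of_injective_algebraMap (algebraMap K K').injective p
    have hfr : finrank K K' = p := finrank_adjoin_of_pow hbnot hc.symm
    have hcnr : ∀ e : K, e ^ p ≠ c := by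
      intro e he
      apply hbnot
      refine ⟨e, frobenius_inj L p ?_⟩
      show (algebraMap K L e) ^ p = b ^ p
      rw [← map_pow, he, hc]
    set b' : K' := ⟨b, IntermediateField.mem_adjoin_simple_self K b⟩ with hb'def
    have hb'coe : algebraMap K' L b' = b := rfl
    have hb'p : b' ^ p = algebraMap K K' c := by
      apply (algebraMap K' L).injective
      rw [map_pow, hb'coe, ← IsScalarTower.algebraMap_apply K K' L, ← hc]
    have hfrob_comm : (frobenius K' p).comp (algebraMap K K')
        = (algebraMap K K').comp (frobenius K p) := by
      ext a
      simp [frobenius_def, map_pow]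
    have key : ∀ x : K, ∃ z : K', z ^ p = algebraMap K K' x := by
      intro x
      obtain ⟨g, hg⟩ := exists_eval₂_frobenius hdeg c x hcnr
      refine ⟨eval₂ (algebraMap K K') b' g, ?_⟩
      rw [← frobenius_def, Polynomial.hom_eval₂, hfrob_comm, frobenius_def, hb'p,
        ← Polynomial.hom_eval₂, hg]
    have hbint : IsIntegral K b := IsPurelyInseparable.isIntegral' K b
    have hcoe_adj : ∀ v : K', ∃ g : Polynomial K, (algebraMap K' L v) = Polynomial.aeval b g := by
      intro v
      have hv : (algebraMap K' L v) ∈ (IntermediateField.adjoin K ({b} : Set L)).toSubalgebra :=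
        v.2
      rw [IntermediateField.adjoin_simple_toSubalgebra_of_isAlgebraic hbint.isAlgebraic,
        Algebra.adjoin_singleton_eq_range_aeval] at hv
      obtain ⟨g, hg⟩ := hv
      exact ⟨g, hg.symm⟩
    have hfrob_commL : (frobenius L p).comp (algebraMap K L)
        = (algebraMap K L).comp (frobenius K p) := by
      ext a
      simp [frobenius_def, map_pow]
    have hFE : (frobenius K' p).fieldRange = (algebraMap K K' : K →+* K').fieldRange := by
      ext u
      simp only [RingHom.mem_fieldRange]
      constructor
      · rintro ⟨v, rfl⟩
        obtain ⟨g, hg⟩ := hcoe_adj v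
        refine ⟨eval₂ (frobenius K p) c g, ?_⟩
        apply (algebraMap K' L).injective
        rw [← IsScalarTower.algebraMap_apply K K' L]
        show algebraMap K L _ = algebraMap K' L (v ^ p)
        have hLHS : algebraMap K L (eval₂ (frobenius K p) c g)
            = eval₂ ((algebraMap K L).comp (frobenius K p)) (algebraMap K L c) g :=
          Polynomial.hom_eval₂ _ _ _ _
        have hRHS : (algebraMap K' L (v ^ p))
            = eval₂ ((frobenius L p).comp (algebraMap K L)) (frobenius L p b) g := by
          rw [map_pow, hg, Polynomial.aeval_def, ← frobenius_def]
          exact Polynomial.hom_eval₂ _ _ _ _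
        rw [hLHS, hRHS, hfrob_commL, frobenius_def, ← hc]
      · rintro ⟨x, rfl⟩
        obtain ⟨z, hz⟩ := key x
        exact ⟨z, by rw [frobenius_def, hz]⟩
    have hE : finrank ((algebraMap K K' : K →+* K').fieldRange) K' = p := by
      have hr := Algebra.rank_eq_of_equiv_equiv
        (fieldRangeEquiv (algebraMap K K' : K →+* K')) (RingEquiv.refl K') (by ext a; rfl)
      have h2 : finrank ((algebraMap K K' : K →+* K').fieldRange) K' = finrank K K' := by
        unfold Module.finrank
        rw [hr]
      rw [h2, hfr]
    have hdeg' : finrank (frobenius K' p).fieldRange K' = p := by rw [hFE]; exact hE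
    have hdd : d = p * finrank K' L := by
      rw [← hd, ← Module.finrank_mul_finrank K K' L, hfr]
    have hlt : finrank K' L < d := by
      have hpos : 0 < finrank K' L := finrank_pos
      have := hp.two_le
      nlinarith
    obtain ⟨n, hn, hkey⟩ := IH (finrank K' L) hlt K' L hdeg' rfl
    refine ⟨n + 1, by rw [hdd, hn, pow_succ'], fun x => ?_⟩
    obtain ⟨z, hz⟩ := key x
    obtain ⟨y, hy⟩ := hkey z
    refine ⟨y, ?_⟩
    rw [pow_succ, pow_mul, hy, ← map_pow, hz, ← IsScalarTower.algebraMap_apply K K' L]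

/-- Let `K` be a field of characteristic `p > 0` with `[K : Kᵖ] = p`, and let
`L/K` be a finite purely inseparable extension. Then the field norm `N_{L/K} : Lˣ → Kˣ` is
surjective. Here `Kᵖ` is the range of the Frobenius endomorphism, and `[K : Kᵖ]` is the degree
of `K` over this subfield. -/
theorem norm_surjective_of_purelyInseparable
    (p : ℕ) [Fact p.Prime]
    (K L : Type*) [Field K] [Field L] [CharP K p] [Algebra K L]
    [FiniteDimensional K L] [IsPurelyInseparable K L]
    (hdeg : Module.finrank (frobenius K p).fieldRange K = p) :
    ∀ x : Kˣ, ∃ y : Lˣ, Algebra.norm K (y : L) = (x : K) := by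
  intro x
  have hp : p.Prime := Fact.out
  haveI : CharP L p := charP_of_injective_algebraMap (algebraMap K L).injective p
  set B := (⊥ : IntermediateField K L) with hB
  haveI : CharP B p := charP_of_injective_algebraMap (algebraMap K B).injective p
  have hdegB : finrank (frobenius B p).fieldRange B = p :=
    hdeg_transfer ((IntermediateField.botEquiv K L).symm.toRingEquiv) hdeg
  obtain ⟨n, hn, hkey⟩ := aux_induction (p := p) (finrank B L) B L hdegB rfl
  have hfrk : finrank K L = p ^ n := by
    rw [← hn, ← Module.finrank_mul_finrank K B L, IntermediateField.finrank_bot, one_mul]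
  obtain ⟨y, hy⟩ := hkey (algebraMap K B (x : K))
  have hy' : y ^ p ^ n = algebraMap K L (x : K) := by
    rw [hy, ← IsScalarTower.algebraMap_apply K B L]
  have hy0 : y ≠ 0 := by
    intro h
    rw [h, zero_pow (pow_ne_zero n hp.ne_zero)] at hy'
    exact x.ne_zero ((map_eq_zero_iff (algebraMap K L) (algebraMap K L).injective).mp hy'.symm)
  refine ⟨Units.mk0 y hy0, ?_⟩
  have hnorm : (Algebra.norm K y) ^ p ^ n = ((x : K)) ^ p ^ n := by
    rw [← map_pow (Algebra.norm K) y, hy', Algebra.norm_algebraMap, hfrk]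
  exact (iterateFrobenius K p n).injective
    (by rw [iterateFrobenius_def, iterateFrobenius_def]; exact hnorm)
end

section
/- Let F ∈ k[X₀,…,X_n] be a homogeneous polynomial of degree d over the field l = k(ω₁,…,ω_{m-1}) where 1, ω₁, …, ω_{m-1} is a k-basis of l of degree m = [l:k]. Substituting X_i = Σ_j T_{i,j} ω_j and expanding, one obtains homogeneous polynomials F₀,…,F_{m-1} ∈ k[T_{0,0},…,T_{n,m-1}] of degree d such that F(Σ T_{0,j}ω_j, …, Σ T_{n,j}ω_j) = Σ_{j=0}^{m-1} F_j ω_j, and for every field extension k'/k, the system F₀ = ⋯ = F_{m-1} = 0 has a nontrivial k'-solution if and only if F = 0 has a nontrivial (l ⊗_k k')-solution when l ⊗_k k' is a field. -/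
open scoped TensorProduct
open MvPolynomial

noncomputable section
variable {k l : Type} [Field k] [Field l] [Algebra k l] {m : ℕ}

/-- Coordinate of a polynomial over `l` along the basis vector `ω j`. -/
def coordP {σ : Type} (ω : Module.Basis (Fin m) k l) (j : Fin m) (H : MvPolynomial σ l) :
    MvPolynomial σ k :=
  AddMonoidAlgebra.ofCoeff (Finsupp.mapRange (fun c => ω.repr c j) (by simp) (AddMonoidAlgebra.coeff H))

lemma coeff_coordP {σ : Type} (ω : Module.Basis (Fin m) k l) (j : Fin m) (H : MvPolynomial σ l)
    (s : σ →₀ ℕ) : coeff s (coordP ω j H) = ω.repr (coeff s H) j :=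
  Finsupp.mapRange_apply (hf := by simp)

lemma coordP_add {σ : Type} (ω : Module.Basis (Fin m) k l) (j : Fin m) (H₁ H₂ : MvPolynomial σ l) :
    coordP ω j (H₁ + H₂) = coordP ω j H₁ + coordP ω j H₂ := by
  apply MvPolynomial.ext; intro s
  simp [coeff_coordP, coeff_add]

lemma coordP_monomial {σ : Type} (ω : Module.Basis (Fin m) k l) (j : Fin m) (s : σ →₀ ℕ) (c : l) :
    coordP ω j (monomial s c) = monomial s (ω.repr c j) := by
  classical
  apply MvPolynomial.ext; intro s'
  rcases eq_or_ne s s' with rfl | h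
  · simp [coeff_coordP, coeff_monomial]
  · simp [coeff_coordP, coeff_monomial, h]

lemma eval_coordP {σ : Type} (ω : Module.Basis (Fin m) k l) (T : σ → k) (H : MvPolynomial σ l) :
    eval₂ (RingHom.id l) (fun p => algebraMap k l (T p)) H
      = ∑ j, eval T (coordP ω j H) • ω j := by
  induction H using MvPolynomial.induction_on' with
  | add p q hp hq =>
      simp [coordP_add, hp, hq, add_smul, Finset.sum_add_distrib]
  | monomial s c =>
      rw [eval₂_monomial]
      have : (s.prod fun p e => algebraMap k l (T p) ^ e)
          = algebraMap k l (s.prod fun p e => T p ^ e) := by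
        rw [map_finsuppProd]; simp
      rw [this, RingHom.id_apply]
      simp only [coordP_monomial, eval_monomial]
      rw [Finset.sum_congr rfl (fun j _ => (mul_smul (ω.repr c j) (s.prod fun p e => T p ^ e) (ω j)))]
      rw [Finset.sum_congr rfl
        (fun j _ => smul_comm (ω.repr c j) (s.prod fun p e => T p ^ e) (ω j))]
      rw [← Finset.smul_sum, Module.Basis.sum_repr, Algebra.smul_def, mul_comm]

lemma eval₂_coordP {σ : Type} (ω : Module.Basis (Fin m) k l) (k' : Type) [CommRing k'] [Algebra k k']
    (x : σ → k') (H : MvPolynomial σ l) :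
    eval₂ (algebraMap l (l ⊗[k] k')) (fun p => (1 : l) ⊗ₜ[k] x p) H
      = ∑ j, ω j ⊗ₜ[k] eval₂ (algebraMap k k') x (coordP ω j H) := by
  induction H using MvPolynomial.induction_on' with
  | add p q hp hq =>
      simp [coordP_add, hp, hq, TensorProduct.tmul_add, Finset.sum_add_distrib]
  | monomial s c =>
      rw [eval₂_monomial]
      have h1 : (s.prod fun p e => ((1 : l) ⊗ₜ[k] x p) ^ e)
          = (1 : l) ⊗ₜ[k] (s.prod fun p e => x p ^ e) := by
        have : ∀ p, (1 : l) ⊗ₜ[k] x p = Algebra.TensorProduct.includeRight (x p) := fun p => rfl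
        simp_rw [this, ← map_pow]
        rw [← map_finsuppProd]
        rfl
      rw [h1]
      have h2 : algebraMap l (l ⊗[k] k') c = c ⊗ₜ[k] 1 := rfl
      rw [h2, Algebra.TensorProduct.tmul_mul_tmul, mul_one, one_mul]
      simp only [coordP_monomial, eval₂_monomial]
      have h3 : ∀ j : Fin m, ω j ⊗ₜ[k]
            (algebraMap k k' (ω.repr c j) * s.prod fun p e => x p ^ e)
          = (ω.repr c j • ω j) ⊗ₜ[k] (s.prod fun p e => x p ^ e) := by
        intro j
        rw [← Algebra.smul_def, TensorProduct.tmul_smul, TensorProduct.smul_tmul']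
      rw [Finset.sum_congr rfl (fun j _ => h3 j), ← TensorProduct.sum_tmul, Module.Basis.sum_repr]

end



open scoped TensorProduct

/-- Let `F ∈ l[X₀,…,X_n]` be homogeneous of degree `d` over a finite
extension `l/k` of degree `m` with `k`-basis `1 = ω₀, ω₁, …, ω_{m-1}`.  Substituting
`X_i = Σ_j T_{i,j}·ω_j` and expanding along the basis yields homogeneous polynomials
`F₀, …, F_{m-1} ∈ k[T_{i,j}]` of degree `d` with
`F(Σ_j T_{0,j}ω_j, …) = Σ_j F_j(T)·ω_j`, and for every field extension `k'/k` such that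
`l ⊗_k k'` is a field, the system `F₀ = ⋯ = F_{m-1} = 0` has a nontrivial `k'`-solution iff
`F = 0` has a nontrivial `(l ⊗_k k')`-solution. -/
theorem weil_restriction_of_form
    (k l : Type) [Field k] [Field l] [Algebra k l]
    (m : ℕ) (hm : 0 < m) (hml : Module.finrank k l = m)
    (ω : Module.Basis (Fin m) k l) (hω : ω ⟨0, hm⟩ = 1)
    (n d : ℕ) (F : MvPolynomial (Fin (n + 1)) l) (hF : F.IsHomogeneous d) :
    ∃ Fj : Fin m → MvPolynomial (Fin (n + 1) × Fin m) k,
      (∀ j, (Fj j).IsHomogeneous d) ∧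
      (∀ T : Fin (n + 1) × Fin m → k,
        MvPolynomial.eval (fun i => ∑ j : Fin m, T (i, j) • ω j) F
          = ∑ j : Fin m, MvPolynomial.eval T (Fj j) • ω j) ∧
      (∀ (k' : Type) [Field k'] [Algebra k k'], IsField (l ⊗[k] k') →
        ((∃ x : Fin (n + 1) × Fin m → k', x ≠ 0 ∧
            ∀ j, MvPolynomial.eval₂ (algebraMap k k') x (Fj j) = 0) ↔
          (∃ y : Fin (n + 1) → l ⊗[k] k', y ≠ 0 ∧
            MvPolynomial.eval₂ (algebraMap l (l ⊗[k] k')) y F = 0))) := by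
  classical
  let subst : Fin (n + 1) → MvPolynomial (Fin (n + 1) × Fin m) l :=
    fun i => ∑ j : Fin m, MvPolynomial.C (ω j) * MvPolynomial.X (i, j)
  let G : MvPolynomial (Fin (n + 1) × Fin m) l := MvPolynomial.eval₂ MvPolynomial.C subst F
  have hG : G.IsHomogeneous d := by
    have hsub : ∀ i, (subst i).IsHomogeneous 1 := by
      intro i
      apply MvPolynomial.IsHomogeneous.sum
      intro j _
      simpa using (MvPolynomial.isHomogeneous_X l ((i, j) : Fin (n + 1) × Fin m)).C_mul (ω j)
    simpa using hF.eval₂ MvPolynomial.C subst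
      (fun r => MvPolynomial.isHomogeneous_C _ r) hsub
  refine ⟨fun j => coordP ω j G, ?_, ?_, ?_⟩
  · intro j s hs
    apply hG
    intro hzero
    rw [coeff_coordP, hzero] at hs
    simp at hs
  · intro T
    have hy : (fun i => ∑ j : Fin m, T (i, j) • ω j)
        = fun i => MvPolynomial.eval₂ (RingHom.id l)
            (fun p => algebraMap k l (T p)) (subst i) := by
      funext i
      show _ = MvPolynomial.eval₂Hom (RingHom.id l) (fun p => algebraMap k l (T p)) (subst i)
      rw [show subst i = ∑ j : Fin m, MvPolynomial.C (ω j) * MvPolynomial.X (i, j) from rfl,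
        map_sum]
      simp [Algebra.smul_def, mul_comm]
    show MvPolynomial.eval₂ (RingHom.id l) _ F = _
    rw [hy, MvPolynomial.eval₂_assoc, eval_coordP]
  · intro k' _ _ _hfield
    let e := Algebra.TensorProduct.comm k l k'
    let b := ω.baseChange k'
    have hbj : ∀ (c : k') (j : Fin m), c ⊗ₜ[k] ω j = c • b j := by
      intro c j
      rw [Module.Basis.baseChange_apply, TensorProduct.smul_tmul']
      simp
    have key : ∀ x : Fin (n + 1) × Fin m → k',
        MvPolynomial.eval₂ (algebraMap l (l ⊗[k] k'))
            (fun i => ∑ j : Fin m, ω j ⊗ₜ[k] x (i, j)) F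
          = ∑ j : Fin m, ω j ⊗ₜ[k] MvPolynomial.eval₂ (algebraMap k k') x (coordP ω j G) := by
      intro x
      have hy : (fun i => ∑ j : Fin m, ω j ⊗ₜ[k] x (i, j))
          = fun i => MvPolynomial.eval₂ (algebraMap l (l ⊗[k] k'))
              (fun p => (1 : l) ⊗ₜ[k] x p) (subst i) := by
        funext i
        show _ = MvPolynomial.eval₂Hom (algebraMap l (l ⊗[k] k'))
          (fun p => (1 : l) ⊗ₜ[k] x p) (subst i)
        rw [show subst i = ∑ j : Fin m, MvPolynomial.C (ω j) * MvPolynomial.X (i, j) from rfl,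
          map_sum]
        have : ∀ j : Fin m, algebraMap l (l ⊗[k] k') (ω j) * ((1 : l) ⊗ₜ[k] x (i, j))
            = ω j ⊗ₜ[k] x (i, j) := by
          intro j
          rw [show algebraMap l (l ⊗[k] k') (ω j) = (ω j) ⊗ₜ[k] (1 : k') from rfl,
            Algebra.TensorProduct.tmul_mul_tmul, mul_one, one_mul]
        simp only [MvPolynomial.coe_eval₂Hom, MvPolynomial.eval₂_mul, MvPolynomial.eval₂_C,
          MvPolynomial.eval₂_X, this]
      rw [hy, MvPolynomial.eval₂_assoc, eval₂_coordP]
    have hsum0 : ∀ r : Fin m → k', (∑ j : Fin m, ω j ⊗ₜ[k] r j) = 0 → r = 0 := by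
      intro r hr
      have h2 : ∑ j : Fin m, r j • b j = 0 := by
        have h1 := congrArg e hr
        rw [map_sum, map_zero] at h1
        simpa [e, Algebra.TensorProduct.comm_tmul, hbj] using h1
      funext j
      exact Fintype.linearIndependent_iff.mp b.linearIndependent r h2 j
    have hrep : ∀ v : l ⊗[k] k', v = ∑ j : Fin m, ω j ⊗ₜ[k] (b.repr (e v) j) := by
      intro v
      apply e.injective
      rw [map_sum]
      simp only [e, Algebra.TensorProduct.comm_tmul]
      rw [Finset.sum_congr rfl fun j _ => hbj (b.repr ((Algebra.TensorProduct.comm k l k') v) j) j,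
        Module.Basis.sum_repr]
    constructor
    · rintro ⟨x, hx0, hx⟩
      refine ⟨fun i => ∑ j : Fin m, ω j ⊗ₜ[k] x (i, j), ?_, ?_⟩
      · intro hy
        apply hx0
        funext p
        have := congrFun hy p.1
        have h0 := hsum0 (fun j => x (p.1, j)) (by simpa using this)
        exact congrFun h0 p.2
      · rw [key x]
        simp [hx]
    · rintro ⟨y, hy0, hy⟩
      refine ⟨fun p => b.repr (e (y p.1)) p.2, ?_, ?_⟩
      · intro hx
        apply hy0
        funext i
        rw [hrep (y i)]
        have : ∀ j : Fin m, b.repr (e (y i)) j = 0 := fun j => congrFun hx (i, j)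
        simp [this]
      · have h3 := key (fun p => b.repr (e (y p.1)) p.2)
        rw [show (fun i => ∑ j : Fin m, ω j ⊗ₜ[k] b.repr (e (y i)) j) = y from
          funext fun i => (hrep (y i)).symm] at h3
        rw [hy] at h3
        intro j
        exact congrFun (hsum0 _ h3.symm) j
end

section
/- Let k be a field of characteristic p such that [k : k^p] ≤ p^δ, and let x ∈ k \ k^p. Let K = ⋃_{m≥1} k^s(x^{1/p^m}), where k^s is a separable closure of k. Then [K : K^p] ≤ p^{δ-1}. -/
set_option synthInstance.maxHeartbeats 1000000
set_option maxHeartbeats 1000000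

open IntermediateField Polynomial

universe v

section Aux

variable {p : ℕ}

/-- If `α ^ p` comes from the base field `L` but `α` does not, then `L⟮α⟯ / L` has degree `p`. -/
lemma aux_adjoin_finrank (hp : p.Prime) {L : Type*} {F : Type*} [Field L] [Field F]
    [Algebra L F] [CharP F p] (α : F) (c : L) (hc : algebraMap L F c = α ^ p)
    (hα : α ∉ Set.range (algebraMap L F)) :
    Module.finrank L L⟮α⟯ = p := by
  haveI : Fact p.Prime := ⟨hp⟩
  have hroot : Polynomial.aeval α (X ^ p - C c : L[X]) = 0 := by
    simp [hc]
  have hirr : Irreducible (X ^ p - C c : L[X]) := by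
    refine X_pow_sub_C_irreducible_of_prime hp fun d hd => hα ⟨d, ?_⟩
    have h1 : (algebraMap L F d) ^ p = α ^ p := by rw [← map_pow, hd, hc]
    exact frobenius_inj F p (by simpa only [frobenius_def] using h1)
  have hint : IsIntegral L α := ⟨X ^ p - C c, monic_X_pow_sub_C c hp.ne_zero, hroot⟩
  rw [IntermediateField.adjoin.finrank hint,
    ← minpoly.eq_of_irreducible_of_monic hirr hroot (monic_X_pow_sub_C c hp.ne_zero)]
  exact natDegree_X_pow_sub_C

/-- A finite extension of exponent-one purely inseparable type of degree `≤ p ^ n`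
is generated by `n` elements. -/
lemma aux_exists_gens (hp : p.Prime) {F : Type v} [Field F] [CharP F p] :
    ∀ (n : ℕ) (L : Type v) [Field L] [Algebra L F] [FiniteDimensional L F],
      (∀ α : F, α ^ p ∈ Set.range (algebraMap L F)) →
      Module.finrank L F ≤ p ^ n →
      ∃ b : Fin n → F, IntermediateField.adjoin L (Set.range b) = ⊤ := by
  intro n
  induction n with
  | zero =>
    intro L _ _ _ _ hle
    refine ⟨Fin.elim0, ?_⟩
    rw [eq_top_iff]
    rintro z -
    have h1 : Module.finrank L F = 1 := le_antisymm (by simpa using hle) Module.finrank_pos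
    have h2 := Subalgebra.bot_eq_top_of_finrank_eq_one h1
    have hz : z ∈ (⊥ : Subalgebra L F) := h2 ▸ trivial
    obtain ⟨y, hy⟩ := Algebra.mem_bot.1 hz
    exact hy ▸ (IntermediateField.adjoin L _).algebraMap_mem y
  | succ n ih =>
    intro L _ _ _ hpow hle
    by_cases hsurj : ∀ α : F, α ∈ Set.range (algebraMap L F)
    · refine ⟨fun _ => 1, ?_⟩
      rw [eq_top_iff]
      rintro z -
      obtain ⟨y, hy⟩ := hsurj z
      exact hy ▸ (IntermediateField.adjoin L _).algebraMap_mem y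
    · push_neg at hsurj
      obtain ⟨α, hα⟩ := hsurj
      obtain ⟨c, hc⟩ := hpow α
      have hfr : Module.finrank L L⟮α⟯ = p := aux_adjoin_finrank hp α c hc hα
      haveI : FiniteDimensional (↥L⟮α⟯) F := Module.Finite.right L (↥L⟮α⟯) F
      have hpow' : ∀ β : F, β ^ p ∈ Set.range (algebraMap (↥L⟮α⟯) F) := by
        intro β
        obtain ⟨y, hy⟩ := hpow β
        exact ⟨⟨algebraMap L F y, L⟮α⟯.algebraMap_mem y⟩, hy⟩
      have hle' : Module.finrank (↥L⟮α⟯) F ≤ p ^ n := by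
        have hmul := Module.finrank_mul_finrank L (↥L⟮α⟯) F
        rw [hfr] at hmul
        have hpn : p * Module.finrank (↥L⟮α⟯) F ≤ p * p ^ n := by
          rw [hmul]
          calc Module.finrank L F ≤ p ^ (n + 1) := hle
            _ = p * p ^ n := by rw [pow_succ']
        exact Nat.le_of_mul_le_mul_left hpn hp.pos
      obtain ⟨b, hb⟩ := ih (↥L⟮α⟯) hpow' hle'
      refine ⟨Fin.cons α b, ?_⟩
      have h3 := IntermediateField.adjoin_adjoin_left L {α} (Set.range b)
      rw [hb, IntermediateField.restrictScalars_top] at h3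
      rw [Fin.range_cons, Set.insert_eq]
      exact h3.symm

/-- If `F` is generated over `L` by `n` elements whose `p`-th powers lie in `L`, then
`[F : L] ≤ p ^ n`. -/
lemma aux_rank_le (hp : p.Prime) {F : Type v} [Field F] :
    ∀ (n : ℕ) (L : Type v) [Field L] [Algebra L F] (b : Fin n → F),
      (∀ i, ∃ c : L, algebraMap L F c = b i ^ p) →
      IntermediateField.adjoin L (Set.range b) = ⊤ →
      Module.rank L F ≤ (p : Cardinal) ^ n := by
  intro n
  induction n with
  | zero =>
    intro L _ _ b _ htop
    rw [Set.range_eq_empty, IntermediateField.adjoin_empty] at htop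
    rw [pow_zero, rank_le_one_iff]
    refine ⟨1, fun v => ?_⟩
    have hv : v ∈ (⊥ : IntermediateField L F) := htop ▸ trivial
    obtain ⟨y, hy⟩ := IntermediateField.mem_bot.1 hv
    exact ⟨y, by rw [Algebra.smul_def, mul_one, hy]⟩
  | succ n ih =>
    intro L _ _ b hpow htop
    obtain ⟨c, hc⟩ := hpow 0
    have hroot : Polynomial.aeval (b 0) (X ^ p - C c : L[X]) = 0 := by simp [hc]
    have hint : IsIntegral L (b 0) := ⟨X ^ p - C c, monic_X_pow_sub_C c hp.ne_zero, hroot⟩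
    haveI := IntermediateField.adjoin.finiteDimensional hint
    have h1 : Module.rank L (↥L⟮b 0⟯) ≤ (p : Cardinal) := by
      rw [← Module.finrank_eq_rank, Nat.cast_le]
      rw [IntermediateField.adjoin.finrank hint]
      refine le_trans (Polynomial.natDegree_le_of_dvd (minpoly.dvd L _ hroot)
        (X_pow_sub_C_ne_zero hp.pos c)) ?_
      rw [natDegree_X_pow_sub_C]
    have hpow' : ∀ i, ∃ d : ↥L⟮b 0⟯, algebraMap (↥L⟮b 0⟯) F d = (Fin.tail b) i ^ p := by
      intro i
      obtain ⟨y, hy⟩ := hpow i.succ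
      exact ⟨⟨algebraMap L F y, L⟮b 0⟯.algebraMap_mem y⟩, hy⟩
    have htop' : IntermediateField.adjoin (↥L⟮b 0⟯) (Set.range (Fin.tail b)) = ⊤ := by
      apply IntermediateField.restrictScalars_injective L
      rw [IntermediateField.adjoin_adjoin_left, IntermediateField.restrictScalars_top,
        ← Set.insert_eq, ← Fin.range_cons, Fin.cons_self_tail]
      exact htop
    have h2 := ih (↥L⟮b 0⟯) (Fin.tail b) hpow' htop'
    calc Module.rank L F
        = Module.rank L (↥L⟮b 0⟯) * Module.rank (↥L⟮b 0⟯) F := (rank_mul_rank L _ F).symm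
      _ ≤ (p : Cardinal) * (p : Cardinal) ^ n := mul_le_mul' h1 h2
      _ = (p : Cardinal) ^ (n + 1) := (pow_succ' _ _).symm

end Aux

/-- Let `k` be a field of characteristic `p` with `[k : kᵖ] ≤ p^δ`, and let
`x ∈ k \ kᵖ`.  Let `K = ⋃_{m ≥ 1} kˢ(x^{1/p^m})` (inside a fixed algebraic closure), where
`kˢ` is the separable closure of `k`.  Then `[K : Kᵖ] ≤ p^{δ-1}`.  Degrees of the Frobenius
subfields are expressed via `Module.rank`. -/
theorem pDegree_of_union_separableClosure_adjoin_roots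
    (p : ℕ) [Fact p.Prime] (δ : ℕ) (hδ : 0 < δ)
    (k : Type*) [Field k] [CharP k p]
    (hk : Module.rank (frobenius k p).fieldRange k ≤ (p : Cardinal) ^ δ)
    (x : k) (hx : x ∉ (frobenius k p).fieldRange)
    (K : IntermediateField k (AlgebraicClosure k))
    (hK : K = separableClosure k (AlgebraicClosure k) ⊔
      IntermediateField.adjoin k
        {y : AlgebraicClosure k | ∃ m : ℕ, 1 ≤ m ∧ y ^ p ^ m = algebraMap k _ x}) :
    haveI : CharP (↥K) p := charP_of_injective_algebraMap (algebraMap k ↥K).injective p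
    Module.rank (frobenius (↥K) p).fieldRange (↥K) ≤ (p : Cardinal) ^ (δ - 1) := by
  haveI : CharP (↥K) p := charP_of_injective_algebraMap (algebraMap k ↥K).injective p
  have hpp : p.Prime := Fact.out
  set Ω := AlgebraicClosure k with hΩ
  haveI : CharP Ω p := charP_of_injective_algebraMap (algebraMap k Ω).injective p
  set S : Set Ω := {y : Ω | ∃ m : ℕ, 1 ≤ m ∧ y ^ p ^ m = algebraMap k Ω x} with hS
  -- the canonical tower of p-power roots of x
  set r : ℕ → Ω := fun m => ((frobeniusEquiv Ω p).symm)^[m] (algebraMap k Ω x) with hr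
  have hr0 : r 0 = algebraMap k Ω x := rfl
  have hrsucc : ∀ m, r (m + 1) ^ p = r m := by
    intro m
    show (((frobeniusEquiv Ω p).symm)^[m + 1] (algebraMap k Ω x)) ^ p = _
    rw [Function.iterate_succ_apply']
    exact frobeniusEquiv_symm_pow_p Ω p _
  have hrpow : ∀ m, r m ^ p ^ m = algebraMap k Ω x := by
    intro m
    induction m with
    | zero => simpa using hr0
    | succ m ihm => rw [pow_succ', pow_mul, hrsucc, ihm]
  have hrS : ∀ m, 1 ≤ m → r m ∈ S := fun m hm => ⟨m, hm, hrpow m⟩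
  have hSK : S ⊆ (K : Set Ω) := by
    rw [hK]
    exact (IntermediateField.subset_adjoin k S).trans
      (SetLike.coe_subset_coe.2 le_sup_right)
  have hrK : ∀ m, 1 ≤ m → r m ∈ K := fun m hm => hSK (hrS m hm)
  have hES : ∀ y ∈ S, ∃ m, 1 ≤ m ∧ y = r m := by
    rintro y ⟨m, hm, hy⟩
    refine ⟨m, hm, (iterateFrobenius Ω p m).injective ?_⟩
    rw [iterateFrobenius_def, iterateFrobenius_def, hy, hrpow m]
  -- the base field kᵖ inside k
  set Pk := (frobenius k p).fieldRange with hPk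
  haveI hkfin : FiniteDimensional (↥Pk) k := Module.rank_lt_aleph0_iff.mp <| by
    refine lt_of_le_of_lt hk ?_
    rw [← Nat.cast_pow]
    exact Cardinal.nat_lt_aleph0 _
  have hkle : Module.finrank (↥Pk) k ≤ p ^ δ :=
    Module.finrank_le_of_rank_le (by exact_mod_cast hk)
  have hkpow : ∀ α : k, α ^ p ∈ Set.range (algebraMap (↥Pk) k) := by
    intro α
    exact ⟨⟨α ^ p, ⟨α, frobenius_def p α⟩⟩, rfl⟩
  have hxnot : x ∉ Set.range (algebraMap (↥Pk) k) := by
    rintro ⟨⟨v, hv⟩, h⟩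
    have hvx : v = x := h
    exact hx (hvx ▸ hv)
  -- adjoin x first
  have hxpmem : x ^ p ∈ Pk := ⟨x, frobenius_def p x⟩
  have hfr1 : Module.finrank (↥Pk) (↥(IntermediateField.adjoin (↥Pk) {x})) = p :=
    aux_adjoin_finrank hpp x ⟨x ^ p, hxpmem⟩ rfl hxnot
  haveI : FiniteDimensional (↥(IntermediateField.adjoin (↥Pk) {x})) k :=
    Module.Finite.right (↥Pk) _ k
  have hpow1 : ∀ α : k, α ^ p ∈ Set.range (algebraMap (↥(IntermediateField.adjoin (↥Pk) {x})) k) := by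
    intro α
    obtain ⟨y, hy⟩ := hkpow α
    exact ⟨⟨algebraMap (↥Pk) k y, (IntermediateField.adjoin (↥Pk) {x}).algebraMap_mem y⟩, hy⟩
  have hle1 : Module.finrank (↥(IntermediateField.adjoin (↥Pk) {x})) k ≤ p ^ (δ - 1) := by
    have hmul := Module.finrank_mul_finrank (↥Pk) (↥(IntermediateField.adjoin (↥Pk) {x})) k
    rw [hfr1] at hmul
    have hpn : p * Module.finrank (↥(IntermediateField.adjoin (↥Pk) {x})) k ≤ p * p ^ (δ - 1) := by
      rw [hmul]
      calc Module.finrank (↥Pk) k ≤ p ^ δ := hkle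
        _ = p * p ^ (δ - 1) := by
          rw [← pow_succ']
          congr 1
          omega
    exact Nat.le_of_mul_le_mul_left hpn hpp.pos
  obtain ⟨b, hb⟩ := aux_exists_gens hpp (δ - 1) (↥(IntermediateField.adjoin (↥Pk) {x}))
    hpow1 hle1
  have hktop : IntermediateField.adjoin (↥Pk) ({x} ∪ Set.range b) = ⊤ := by
    have h3 := IntermediateField.adjoin_adjoin_left (↥Pk) {x} (Set.range b)
    rw [hb, IntermediateField.restrictScalars_top] at h3
    exact h3.symm
  -- move to K
  set PK := (frobenius (↥K) p).fieldRange with hPK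
  set b' : Fin (δ - 1) → ↥K := fun i => ⟨algebraMap k Ω (b i), K.algebraMap_mem (b i)⟩ with hb'
  set A := IntermediateField.adjoin (↥PK) (Set.range b') with hA
  set A' : Subfield Ω := A.toSubfield.map (algebraMap (↥K) Ω) with hA'
  have hmemA' : ∀ z : ↥K, z ∈ A → (z : Ω) ∈ A' := fun z hz => ⟨z, hz, rfl⟩
  have hPA' : ∀ z : ↥K, z ∈ PK → (z : Ω) ∈ A' := by
    intro z hz
    exact ⟨algebraMap (↥PK) (↥K) ⟨z, hz⟩, A.algebraMap_mem ⟨z, hz⟩, rfl⟩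
  have hppow : ∀ w : Ω, w ∈ K → w ^ p ∈ A' := by
    intro w hw
    have h1 : ((⟨w, hw⟩ : ↥K) ^ p) ∈ PK := ⟨⟨w, hw⟩, frobenius_def p _⟩
    have h2 := hPA' _ h1
    simpa using h2
  -- the image of k lies in A'
  have hkA' : ∀ c : k, algebraMap k Ω c ∈ A' := by
    intro c
    have hct : c ∈ IntermediateField.adjoin (↥Pk) ({x} ∪ Set.range b) := hktop ▸ trivial
    induction hct using IntermediateField.adjoin_induction with
    | mem y hy =>
      rcases hy with rfl | ⟨i, rfl⟩
      · have h4 := hppow (r 1) (hrK 1 le_rfl)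
        rwa [hrsucc 0, hr0] at h4
      · exact hmemA' (b' i) (IntermediateField.subset_adjoin _ _ ⟨i, rfl⟩)
    | algebraMap y =>
      obtain ⟨y, hy⟩ := y
      obtain ⟨d, hd⟩ := hy
      have hy' : d ^ p = y := by rw [← frobenius_def]; exact hd
      have h5 := hppow (algebraMap k Ω d) (K.algebraMap_mem d)
      rw [← map_pow, hy'] at h5
      exact h5
    | add a c _ _ ha hc =>
      rw [map_add]; exact A'.add_mem ha hc
    | inv a _ ha =>
      rw [map_inv₀]; exact A'.inv_mem ha
    | mul a c _ _ ha hc =>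
      rw [map_mul]; exact A'.mul_mem ha hc
  -- separable elements lie in A'
  have hsepK : separableClosure k Ω ≤ K := hK ▸ le_sup_left
  have hsepA' : ∀ w : Ω, w ∈ separableClosure k Ω → w ∈ A' := by
    intro w hw
    have hwK : w ∈ K := hsepK hw
    have hsep : IsSeparable k w := (mem_separableClosure_iff).1 hw
    haveI : Algebra.IsSeparable k (↥(IntermediateField.adjoin k {w})) :=
      (isSeparable_adjoin_simple_iff_isSeparable k Ω).2 hsep
    have hadj : IntermediateField.adjoin k {w}
        = IntermediateField.adjoin k ((· ^ p) '' {w}) :=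
      IntermediateField.adjoin_eq_adjoin_pow_expChar_of_isSeparable k Ω {w} p
    have hmem : w ∈ IntermediateField.adjoin k {w ^ p} := by
      have h6 : w ∈ IntermediateField.adjoin k {w} := IntermediateField.mem_adjoin_simple_self k w
      rwa [hadj, Set.image_singleton] at h6
    have hgen : ∀ v, v ∈ IntermediateField.adjoin k {w ^ p} → v ∈ A' := by
      intro v hv
      induction hv using IntermediateField.adjoin_induction with
      | mem y hy =>
        rw [Set.mem_singleton_iff] at hy
        subst hy
        exact hppow w hwK
      | algebraMap c => exact hkA' c
      | add a c _ _ ha hc => exact A'.add_mem ha hc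
      | inv a _ ha => exact A'.inv_mem ha
      | mul a c _ _ ha hc => exact A'.mul_mem ha hc
    exact hgen w hmem
  -- every element of K lies in A'
  have hKA' : ∀ w : Ω, w ∈ K → w ∈ A' := by
    intro w hw
    rw [hK] at hw
    rw [← IntermediateField.adjoin_self k (separableClosure k Ω),
      ← IntermediateField.adjoin_union] at hw
    induction hw using IntermediateField.adjoin_induction with
    | mem y hy =>
      rcases hy with hy | hy
      · exact hsepA' y hy
      · obtain ⟨m, _, rfl⟩ := hES y hy
        have h7 := hppow (r (m + 1)) (hrK (m + 1) (Nat.succ_le_succ (Nat.zero_le m)))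
        rwa [hrsucc m] at h7
    | algebraMap c => exact hkA' c
    | add a c _ _ ha hc => exact A'.add_mem ha hc
    | inv a _ ha => exact A'.inv_mem ha
    | mul a c _ _ ha hc => exact A'.mul_mem ha hc
  have hAtop : A = ⊤ := by
    rw [eq_top_iff]
    rintro z -
    obtain ⟨u, hu, huz⟩ := hKA' z.1 z.2
    have huz' : u = z := Subtype.ext huz
    exact huz' ▸ hu
  have hfin := aux_rank_le hpp (δ - 1) (↥PK) b'
    (fun i => ⟨⟨b' i ^ p, ⟨b' i, frobenius_def p _⟩⟩, rfl⟩) hAtop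
  exact hfin
end

section
/- Let k be a field and l/k a finite extension obtained as l = l_s(x^{1/p^m}) where l_s/k is finite separable and x ∈ k. Then l/k has only finitely many intermediate fields, and hence l/k is a simple extension. -/
open IntermediateField Polynomial

/-- Variant of `Field.primitive_element_inf_aux`: if `F` is infinite, `α` is integral over `F`
and `β` is separable over `F`, then `F⟮α, β⟯` is generated by a single element.  The proof is
a copy of the mathlib proof, with the separability hypothesis weakened to only `β`. -/
theorem primitive_element_inf_aux' {F : Type*} [Field F] [Infinite F] {E : Type*} [Field E]
    [Algebra F E] (α β : E) (hα : IsIntegral F α) (hβ : IsIntegral F β)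
    (hβsep : (minpoly F β).Separable) : ∃ γ : E, F⟮α, β⟯ = F⟮γ⟯ := by
  classical
  let f := minpoly F α
  let g := minpoly F β
  let ιFE := algebraMap F E
  let ιEE' := algebraMap E (SplittingField (g.map ιFE))
  obtain ⟨c, hc⟩ := Field.primitive_element_inf_aux_exists_c (ιEE'.comp ιFE) (ιEE' α) (ιEE' β) f g
  let γ := α + c • β
  suffices β_in_Fγ : β ∈ F⟮γ⟯ by
    use γ
    apply le_antisymm
    · rw [adjoin_le_iff]
      have α_in_Fγ : α ∈ F⟮γ⟯ := by
        rw [← add_sub_cancel_right α (c • β)]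
        exact F⟮γ⟯.sub_mem (mem_adjoin_simple_self F γ) (F⟮γ⟯.toSubalgebra.smul_mem β_in_Fγ c)
      rintro x (rfl | rfl) <;> assumption
    · rw [adjoin_simple_le_iff]
      have α_in_Fαβ : α ∈ F⟮α, β⟯ := subset_adjoin F {α, β} (Set.mem_insert α {β})
      have β_in_Fαβ : β ∈ F⟮α, β⟯ := subset_adjoin F {α, β} (Set.mem_insert_of_mem α rfl)
      exact F⟮α, β⟯.add_mem α_in_Fαβ (F⟮α, β⟯.smul_mem β_in_Fαβ)
  classical
  let p := EuclideanDomain.gcd ((f.map (algebraMap F F⟮γ⟯)).comp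
    (C (AdjoinSimple.gen F γ) - (C ↑c : F⟮γ⟯[X]) * X)) (g.map (algebraMap F F⟮γ⟯))
  let h := EuclideanDomain.gcd ((f.map ιFE).comp (C γ - C (ιFE c) * X)) (g.map ιFE)
  have map_g_ne_zero : g.map ιFE ≠ 0 := map_ne_zero (minpoly.ne_zero hβ)
  have h_ne_zero : h ≠ 0 :=
    mt EuclideanDomain.gcd_eq_zero_iff.mp (not_and.mpr fun _ => map_g_ne_zero)
  suffices p_linear : p.map (algebraMap F⟮γ⟯ E) = C h.leadingCoeff * (X - C β) by
    have finale : β = algebraMap F⟮γ⟯ E (-p.coeff 0 / p.coeff 1) := by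
      rw [map_div₀, RingHom.map_neg, ← coeff_map, ← coeff_map, p_linear]
      simp [mul_sub, coeff_C, mul_div_cancel_left₀ β (mt leadingCoeff_eq_zero.mp h_ne_zero),
        -map_add]
    rw [finale]
    exact Subtype.mem (-p.coeff 0 / p.coeff 1)
  have h_sep : h.Separable := separable_gcd_right _ hβsep.map
  have h_root : h.eval β = 0 := by
    apply eval_gcd_eq_zero
    · rw [eval_comp, eval_sub, eval_mul, eval_C, eval_C, eval_X, eval_map, ← aeval_def, ←
        Algebra.smul_def, add_sub_cancel_right, minpoly.aeval]
    · rw [eval_map, ← aeval_def, minpoly.aeval]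
  have h_splits : Splits (h.map ιEE') := by
    rw [← Polynomial.gcd_map]
    exact (SplittingField.splits _).of_dvd (map_ne_zero map_g_ne_zero)
      (EuclideanDomain.gcd_dvd_right _ _)
  have h_roots : ∀ x ∈ (h.map ιEE').roots, x = ιEE' β := by
    intro x hx
    rw [mem_roots_map h_ne_zero] at hx
    specialize hc (ιEE' γ - ιEE' (ιFE c) * x) (by
      have f_root := root_left_of_root_gcd hx
      rw [eval₂_comp, eval₂_sub, eval₂_mul, eval₂_C, eval₂_C, eval₂_X, eval₂_map] at f_root
      exact (mem_roots_map (minpoly.ne_zero hα)).mpr f_root)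
    specialize hc x (by
      rw [mem_roots_map (minpoly.ne_zero hβ), ← eval₂_map]
      exact root_right_of_root_gcd hx)
    by_contra a
    apply hc
    apply (div_eq_iff (sub_ne_zero.mpr a)).mpr
    simp only [γ, Algebra.smul_def, RingHom.map_add, RingHom.map_mul, RingHom.comp_apply]
    ring
  rw [← eq_X_sub_C_of_separable_of_root_eq h_sep h_root h_splits h_roots]
  trans EuclideanDomain.gcd (?_ : E[X]) (?_ : E[X])
  · dsimp only [γ]
    convert (gcd_map (algebraMap F⟮γ⟯ E)).symm
  · simp only [map_comp, Polynomial.map_map, ← IsScalarTower.algebraMap_eq, Polynomial.map_sub,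
      map_C, AdjoinSimple.algebraMap_gen, map_add, Polynomial.map_mul, map_X]
    congr

/-- Let `k` be a field of characteristic `p > 0` and `l = l_s(x^{1/p^m})`
where `l_s/k` is a finite separable extension and `x ∈ k`.  Then `l/k` has only finitely
many intermediate fields, and hence `l/k` is a simple extension. -/
theorem finite_intermediateFields_and_simple
    (p : ℕ) [Fact p.Prime]
    (k : Type*) [Field k] [CharP k p]
    (ls : IntermediateField k (AlgebraicClosure k))
    [FiniteDimensional k ls] (hsep : Algebra.IsSeparable k ls)
    (x : k) (m : ℕ) (y : AlgebraicClosure k) (hy : y ^ p ^ m = algebraMap k _ x)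
    (l : IntermediateField k (AlgebraicClosure k)) (hl : l = ls ⊔ k⟮y⟯) :
    Finite (IntermediateField k ↥l) ∧
      ∃ a : ↥l, k⟮a⟯ = (⊤ : IntermediateField k ↥l) := by
  subst hl
  haveI := hsep
  have hyint : IsIntegral k y := Algebra.IsIntegral.isIntegral y
  haveI : FiniteDimensional k ↥(k⟮y⟯ : IntermediateField k (AlgebraicClosure k)) :=
    adjoin.finiteDimensional hyint
  haveI : FiniteDimensional k ↥(ls ⊔ k⟮y⟯) := IntermediateField.finiteDimensional_sup ls k⟮y⟯
  have key : ∃ a : ↥(ls ⊔ k⟮y⟯), k⟮a⟯ = (⊤ : IntermediateField k ↥(ls ⊔ k⟮y⟯)) := by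
    rcases finite_or_infinite k with _ | _
    · exact Field.exists_primitive_element_of_finite_bot k ↥(ls ⊔ k⟮y⟯)
    · obtain ⟨a, ha⟩ := Field.exists_primitive_element k ls
      have hls : k⟮(a : AlgebraicClosure k)⟯ = ls := by
        simpa only [lift_adjoin_simple, lift_top] using congr_arg IntermediateField.lift ha
      have haint : IsIntegral k ((a : AlgebraicClosure k)) := Algebra.IsIntegral.isIntegral _
      have hasep : (minpoly k ((a : AlgebraicClosure k))).Separable := by
        rw [show ((a : AlgebraicClosure k)) = algebraMap ↥ls (AlgebraicClosure k) a from rfl,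
          minpoly.algebraMap_eq (algebraMap ↥ls (AlgebraicClosure k)).injective a]
        exact Algebra.IsSeparable.isSeparable k a
      obtain ⟨γ, hγ⟩ := primitive_element_inf_aux' y (a : AlgebraicClosure k) hyint haint hasep
      have hsup : ls ⊔ k⟮y⟯ = k⟮γ⟯ := by
        rw [← hls, ← adjoin_union]
        rw [show ({(a : AlgebraicClosure k)} ∪ {y} : Set (AlgebraicClosure k))
          = {y, (a : AlgebraicClosure k)} by rw [Set.union_comm, Set.singleton_union]]
        exact hγ
      have hγmem : γ ∈ ls ⊔ k⟮y⟯ := hsup ▸ mem_adjoin_simple_self k γ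
      refine ⟨⟨γ, hγmem⟩, (ls ⊔ k⟮y⟯).lift_injective ?_⟩
      rw [lift_adjoin_simple, lift_top]
      exact hsup.symm
  haveI : Algebra.IsAlgebraic k ↥(ls ⊔ k⟮y⟯) := Algebra.IsAlgebraic.of_finite _ _
  exact ⟨Field.finite_intermediateField_of_exists_primitive_element k _ key, key⟩
end

section
/- Let K be a Henselian discretely valued field with residue field k and q ≥ 1. Let U_q^1(K) be the subgroup of K_q^M(K) generated by symbols {u, a₂, …, a_q} with u ≡ 1 modulo the maximal ideal. If L/K is a finite extension whose residue extension l/k is separable (or if every variety with an L-point is considered), and U_q^1(K) ⊆ N_{L/K}(K_q^M(L)) holds whenever 1 + m_K ⊆ N_{L/K}(Lˣ), then in particular for K = K₀((t)) and L = L₀((t)) with L₀/K₀ finite separable, U_q^1(K) ⊆ N_q(L/K). -/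
open scoped TensorProduct

/-- The Steinberg subgroup of the `q`-fold tensor power of `Fˣ`: the subgroup generated by
elementary tensors `a₁ ⊗ ⋯ ⊗ a_q` with `a_i + a_j = 1` for some `i ≠ j`. -/
noncomputable def SteinbergSubgroup (F : Type*) [Field F] (q : ℕ) :
    AddSubgroup (⨂[ℤ] (_ : Fin q), Additive Fˣ) :=
  AddSubgroup.closure
    {z | ∃ a : Fin q → Fˣ, (∃ i j, i ≠ j ∧ ((a i : F) + (a j : F) = 1)) ∧
      z = PiTensorProduct.tprod ℤ (fun i => Additive.ofMul (a i))}

/-- The `q`-th Milnor K-group of a field `F`: the quotient of the `q`-fold tensor power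
(over `ℤ`) of `Fˣ` by the Steinberg relations. -/
noncomputable def MilnorK (F : Type*) [Field F] (q : ℕ) : Type _ :=
  (⨂[ℤ] (_ : Fin q), Additive Fˣ) ⧸ SteinbergSubgroup F q

noncomputable instance (F : Type*) [Field F] (q : ℕ) : AddCommGroup (MilnorK F q) :=
  inferInstanceAs (AddCommGroup ((⨂[ℤ] (_ : Fin q), Additive Fˣ) ⧸ SteinbergSubgroup F q))

/-- The symbol `{a₁, …, a_q}` in the Milnor K-group. -/
noncomputable def MilnorK.symbol {F : Type*} [Field F] {q : ℕ} (a : Fin q → Fˣ) : MilnorK F q :=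
  QuotientAddGroup.mk (PiTensorProduct.tprod ℤ (fun i => Additive.ofMul (a i)))

/-- Functoriality of Milnor K-groups: the restriction map along a field embedding. -/
noncomputable def MilnorK.map {F F' : Type*} [Field F] [Field F'] (φ : F →+* F') (q : ℕ) :
    MilnorK F q →+ MilnorK F' q :=
  QuotientAddGroup.map _ _
    ((PiTensorProduct.map (fun _ =>
      (AddMonoidHom.toIntLinearMap
        (MonoidHom.toAdditive (Units.map (φ : F →* F')))))).toAddMonoidHom) <| by
      rw [SteinbergSubgroup, ← AddSubgroup.map_le_iff_le_comap, AddMonoidHom.map_closure]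
      apply AddSubgroup.closure_mono
      rintro _ ⟨z, ⟨a, ⟨i, j, hij, hsum⟩, rfl⟩, rfl⟩
      refine ⟨fun i => Units.map (φ : F →* F') (a i), ⟨i, j, hij, ?_⟩, ?_⟩
      · simpa using congrArg φ hsum
      · rw [LinearMap.toAddMonoidHom_coe, PiTensorProduct.map_tprod]; rfl


open PowerSeries

section PS

variable {K₀ L₀ ι : Type*} [Field K₀] [Field L₀] [Algebra K₀ L₀]
  [Fintype ι] [DecidableEq ι]
  [Algebra (PowerSeries K₀) (PowerSeries L₀)]

/-- Coefficientwise coordinate equivalence for power series over a finite extension. -/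
noncomputable def psEquiv (b : Module.Basis ι K₀ L₀)
    (halg : algebraMap (PowerSeries K₀) (PowerSeries L₀) = PowerSeries.map (algebraMap K₀ L₀)) :
    PowerSeries L₀ ≃ₗ[PowerSeries K₀] (ι → PowerSeries K₀) where
  toFun g i := PowerSeries.mk fun n => b.repr (PowerSeries.coeff n g) i
  invFun f := PowerSeries.mk fun n => ∑ i, PowerSeries.coeff n (f i) • b i
  map_add' x y := by
    funext i; ext n
    simp [map_add]
  map_smul' r g := by
    funext i; ext n
    simp only [Pi.smul_apply, smul_eq_mul, PowerSeries.coeff_mk, RingHom.id_apply,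
      PowerSeries.coeff_mul, Algebra.smul_def, halg, PowerSeries.coeff_map]
    rw [map_sum, Finsupp.coe_finset_sum, Finset.sum_apply]
    refine Finset.sum_congr rfl fun p _ => ?_
    rw [← Algebra.smul_def, map_smul, Finsupp.smul_apply, smul_eq_mul]
  left_inv g := by
    ext n
    simp [Module.Basis.sum_repr]
  right_inv f := by
    funext i; ext n
    simp [Finsupp.single_apply]

variable (b : Module.Basis ι K₀ L₀)
  (halg : algebraMap (PowerSeries K₀) (PowerSeries L₀) = PowerSeries.map (algebraMap K₀ L₀))

/-- The corresponding basis of `L₀⟦X⟧` over `K₀⟦X⟧`. -/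
noncomputable def psBasis : Module.Basis ι (PowerSeries K₀) (PowerSeries L₀) :=
  Module.Basis.ofEquivFun (psEquiv b halg)

lemma psEquiv_C (x : L₀) (i : ι) :
    psEquiv b halg (PowerSeries.C x) i = PowerSeries.C (b.repr x i) := by
  ext n
  simp only [psEquiv, LinearEquiv.coe_mk, LinearMap.coe_mk, AddHom.coe_mk, PowerSeries.coeff_mk,
    PowerSeries.coeff_C, apply_ite (b.repr), apply_ite (fun f : ι →₀ K₀ => f i), map_zero]
  simp

lemma psBasis_apply (j : ι) : psBasis b halg j = PowerSeries.C (b j) := by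
  have h := congrFun (Module.Basis.coe_ofEquivFun (psEquiv b halg)) j
  rw [psBasis, h, LinearEquiv.symm_apply_eq]
  funext i
  rw [psEquiv_C]
  simp [Pi.single_apply, Module.Basis.repr_self, Finsupp.single_apply, apply_ite (PowerSeries.C (R := K₀)),
    eq_comm]

lemma psEquiv_dvd {n : ℕ} {z : PowerSeries L₀} (h : (PowerSeries.X : PowerSeries L₀) ^ n ∣ z)
    (i : ι) : (PowerSeries.X : PowerSeries K₀) ^ n ∣ psEquiv b halg z i := by
  rw [PowerSeries.X_pow_dvd_iff] at h ⊢
  intro m hm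
  simp only [psEquiv, LinearEquiv.coe_mk, LinearMap.coe_mk, AddHom.coe_mk, PowerSeries.coeff_mk]
  rw [h m hm, map_zero, Finsupp.coe_zero, Pi.zero_apply]

lemma norm_sub_dvd (b : Module.Basis ι K₀ L₀)
    (halg : algebraMap (PowerSeries K₀) (PowerSeries L₀) = PowerSeries.map (algebraMap K₀ L₀))
    (n : ℕ) (x y : PowerSeries L₀)
    (h : (PowerSeries.X : PowerSeries L₀) ^ n ∣ x - y) :
    (PowerSeries.X : PowerSeries K₀) ^ n ∣
      Algebra.norm (PowerSeries K₀) x - Algebra.norm (PowerSeries K₀) y := by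
  set I : Ideal (PowerSeries K₀) := Ideal.span {(PowerSeries.X : PowerSeries K₀) ^ n} with hI
  rw [← Ideal.mem_span_singleton, ← hI, ← Ideal.Quotient.eq_zero_iff_mem, map_sub, sub_eq_zero]
  rw [Algebra.norm_eq_matrix_det (psBasis b halg), Algebra.norm_eq_matrix_det (psBasis b halg),
    RingHom.map_det, RingHom.map_det]
  congr 1
  ext i j
  simp only [RingHom.mapMatrix_apply, Matrix.map_apply]
  rw [← sub_eq_zero, ← map_sub, Ideal.Quotient.eq_zero_iff_mem, hI, Ideal.mem_span_singleton]
  have : (Algebra.leftMulMatrix (psBasis b halg) x i j)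
      - (Algebra.leftMulMatrix (psBasis b halg) y i j)
      = psEquiv b halg ((x - y) * psBasis b halg j) i := by
    rw [sub_mul, map_sub]
    simp [Algebra.leftMulMatrix_eq_repr_mul, psBasis, Module.Basis.ofEquivFun_repr_apply]
  rw [this]
  exact psEquiv_dvd b halg (dvd_mul_of_dvd_left h _) i


lemma psTrace (b : Module.Basis ι K₀ L₀)
    (halg : algebraMap (PowerSeries K₀) (PowerSeries L₀) = PowerSeries.map (algebraMap K₀ L₀))
    (c : L₀) :
    Matrix.trace (Algebra.leftMulMatrix (psBasis b halg) (PowerSeries.C c))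
      = PowerSeries.C (Algebra.trace K₀ L₀ c) := by
  rw [Algebra.trace_eq_matrix_trace b c, Matrix.trace, Matrix.trace, map_sum]
  refine Finset.sum_congr rfl fun i _ => ?_
  show Algebra.leftMulMatrix (psBasis b halg) (PowerSeries.C c) i i
    = PowerSeries.C (Algebra.leftMulMatrix b c i i)
  rw [Algebra.leftMulMatrix_eq_repr_mul, Algebra.leftMulMatrix_eq_repr_mul]
  rw [psBasis_apply]
  show psEquiv b halg _ i = _
  rw [← map_mul, psEquiv_C]

lemma norm_one_add (b : Module.Basis ι K₀ L₀)
    (halg : algebraMap (PowerSeries K₀) (PowerSeries L₀) = PowerSeries.map (algebraMap K₀ L₀))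
    (c : L₀) (m : ℕ) :
    ∃ J : PowerSeries K₀,
      Algebra.norm (PowerSeries K₀) (1 + PowerSeries.C c * PowerSeries.X ^ m)
        = 1 + PowerSeries.C (Algebra.trace K₀ L₀ c) * PowerSeries.X ^ m
          + J * (PowerSeries.X : PowerSeries K₀) ^ m * PowerSeries.X ^ m := by
  have hX : (PowerSeries.X : PowerSeries L₀) ^ m
      = algebraMap (PowerSeries K₀) (PowerSeries L₀) ((PowerSeries.X : PowerSeries K₀) ^ m) := by
    rw [halg, map_pow, PowerSeries.map_X]
  set A := Algebra.leftMulMatrix (psBasis b halg) (PowerSeries.C c) with hA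
  have hM : Algebra.leftMulMatrix (psBasis b halg) (1 + PowerSeries.C c * PowerSeries.X ^ m)
      = 1 + (PowerSeries.X : PowerSeries K₀) ^ m • A := by
    rw [map_add, map_one, mul_comm, hX, map_mul, AlgHom.commutes,
      Algebra.algebraMap_eq_smul_one, smul_mul_assoc, one_mul]
  refine ⟨(Matrix.det (1 + (Polynomial.X : Polynomial (PowerSeries K₀)) • A.map Polynomial.C)).divX.divX.eval
      ((PowerSeries.X : PowerSeries K₀) ^ m), ?_⟩
  rw [Algebra.norm_eq_matrix_det (psBasis b halg), hM, Matrix.det_one_add_smul, psTrace b halg]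
  ring


variable (K₀ L₀) in
/-- One Hensel-style correction step for solving the norm equation. -/
noncomputable def normStep (τ : K₀ → L₀) (f : PowerSeries K₀) (n : ℕ) (x : PowerSeries L₀) :
    PowerSeries L₀ :=
  letI := Classical.dec ((PowerSeries.X : PowerSeries K₀) ^ (n + 1) ∣
    Algebra.norm (PowerSeries K₀) x - f)
  if h : (PowerSeries.X : PowerSeries K₀) ^ (n + 1) ∣ Algebra.norm (PowerSeries K₀) x - f then
    x * (1 + PowerSeries.C (τ (-(PowerSeries.constantCoeff h.choose)))
      * PowerSeries.X ^ (n + 1))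
  else x

variable (K₀ L₀) in
/-- The sequence of approximate solutions of the norm equation. -/
noncomputable def normSeq (τ : K₀ → L₀) (f : PowerSeries K₀) : ℕ → PowerSeries L₀
  | 0 => 1
  | n + 1 => normStep K₀ L₀ τ f n (normSeq τ f n)

lemma normSeq_spec (b : Module.Basis ι K₀ L₀)
    (halg : algebraMap (PowerSeries K₀) (PowerSeries L₀) = PowerSeries.map (algebraMap K₀ L₀))
    (τ : K₀ → L₀) (hτ : ∀ a, Algebra.trace K₀ L₀ (τ a) = a)
    (f : PowerSeries K₀) (hf : PowerSeries.constantCoeff f = 1) (n : ℕ) :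
    ((PowerSeries.X : PowerSeries K₀) ^ (n + 1) ∣
        Algebra.norm (PowerSeries K₀) (normSeq K₀ L₀ τ f n) - f) ∧
      PowerSeries.constantCoeff (normSeq K₀ L₀ τ f n) = 1 := by
  induction n with
  | zero =>
    constructor
    · rw [pow_one, PowerSeries.X_dvd_iff]
      simp [normSeq, hf]
    · simp [normSeq]
  | succ n ih =>
    obtain ⟨hdvd, hcc⟩ := ih
    have hB : normSeq K₀ L₀ τ f (n + 1)
        = normSeq K₀ L₀ τ f n * (1 + PowerSeries.C
            (τ (-(PowerSeries.constantCoeff hdvd.choose))) * PowerSeries.X ^ (n + 1)) := by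
      rw [normSeq, normStep, dif_pos hdvd]
    set x := normSeq K₀ L₀ τ f n with hx
    set g := hdvd.choose with hgdef
    have hg : Algebra.norm (PowerSeries K₀) x - f
        = (PowerSeries.X : PowerSeries K₀) ^ (n + 1) * g := hdvd.choose_spec
    set c := τ (-(PowerSeries.constantCoeff g)) with hc
    have hcc1 : PowerSeries.constantCoeff (normSeq K₀ L₀ τ f (n + 1)) = 1 := by
      rw [hB]
      simp [hcc, ← hx]
    refine ⟨?_, hcc1⟩
    obtain ⟨J, hJ⟩ := norm_one_add b halg c (n + 1)
    have hnx : PowerSeries.constantCoeff (Algebra.norm (PowerSeries K₀) x) = 1 := by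
      have h1 : (PowerSeries.X : PowerSeries K₀) ∣ Algebra.norm (PowerSeries K₀) x - f :=
        dvd_trans (dvd_pow_self _ (Nat.succ_ne_zero n)) hdvd
      rw [PowerSeries.X_dvd_iff, map_sub, hf, sub_eq_zero] at h1
      exact h1
    have key : Algebra.norm (PowerSeries K₀) (normSeq K₀ L₀ τ f (n + 1)) - f
        = (PowerSeries.X : PowerSeries K₀) ^ (n + 1)
          * (g + Algebra.norm (PowerSeries K₀) x * PowerSeries.C (Algebra.trace K₀ L₀ c)
            + Algebra.norm (PowerSeries K₀) x * J * PowerSeries.X ^ (n + 1)) := by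
      rw [sub_eq_iff_eq_add] at hg
      rw [hB, map_mul, hJ, hg]
      ring
    rw [key, pow_succ]
    refine mul_dvd_mul_left _ ?_
    rw [PowerSeries.X_dvd_iff]
    simp [hτ, hnx, hcc, hc]

lemma normSeq_succ_sub_dvd (τ : K₀ → L₀) (f : PowerSeries K₀) (n : ℕ) :
    (PowerSeries.X : PowerSeries L₀) ^ (n + 1)
      ∣ normSeq K₀ L₀ τ f (n + 1) - normSeq K₀ L₀ τ f n := by
  rw [normSeq, normStep]
  split
  · rw [mul_add, mul_one, add_sub_cancel_left]
    exact dvd_mul_of_dvd_right (dvd_mul_left _ _) _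
  · simp

lemma normSeq_sub_dvd (τ : K₀ → L₀) (f : PowerSeries K₀) {n m : ℕ} (h : n ≤ m) :
    (PowerSeries.X : PowerSeries L₀) ^ (n + 1)
      ∣ normSeq K₀ L₀ τ f m - normSeq K₀ L₀ τ f n := by
  induction m, h using Nat.le_induction with
  | base => simp
  | succ m hm ih =>
    have h1 := normSeq_succ_sub_dvd (L₀ := L₀) τ f m
    have : normSeq K₀ L₀ τ f (m + 1) - normSeq K₀ L₀ τ f n
        = (normSeq K₀ L₀ τ f (m + 1) - normSeq K₀ L₀ τ f m)
          + (normSeq K₀ L₀ τ f m - normSeq K₀ L₀ τ f n) := by ring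
    rw [this]
    exact dvd_add (dvd_trans (pow_dvd_pow _ (by omega)) h1) ih

lemma ps_exists_norm_eq [FiniteDimensional K₀ L₀] [Algebra.IsSeparable K₀ L₀]
    (halg : algebraMap (PowerSeries K₀) (PowerSeries L₀) = PowerSeries.map (algebraMap K₀ L₀))
    (f : PowerSeries K₀) (hf : PowerSeries.constantCoeff f = 1) :
    ∃ x : PowerSeries L₀, PowerSeries.constantCoeff x = 1
      ∧ Algebra.norm (PowerSeries K₀) x = f := by
  classical
  obtain ⟨τ, hτ⟩ := Function.Surjective.hasRightInverse (Algebra.trace_surjective K₀ L₀)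
  set b := Module.finBasis K₀ L₀ with hb
  set β : PowerSeries L₀ :=
    PowerSeries.mk (fun k => PowerSeries.coeff k (normSeq K₀ L₀ τ f (k + 1))) with hβ
  have hstab : ∀ n, (PowerSeries.X : PowerSeries L₀) ^ (n + 1) ∣ β - normSeq K₀ L₀ τ f (n + 1) := by
    intro n
    rw [PowerSeries.X_pow_dvd_iff]
    intro j hj
    rw [map_sub, hβ, PowerSeries.coeff_mk, sub_eq_zero]
    have := normSeq_sub_dvd (L₀ := L₀) τ f (Nat.succ_le_succ (Nat.lt_succ_iff.mp hj))
    rw [PowerSeries.X_pow_dvd_iff] at this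
    have h2 := this j (by omega)
    rw [map_sub, sub_eq_zero] at h2
    exact h2.symm
  refine ⟨β, ?_, ?_⟩
  · have h1 := (normSeq_spec b halg τ hτ f hf 1).2
    have h2 : PowerSeries.constantCoeff β = PowerSeries.coeff 0 (normSeq K₀ L₀ τ f 1) := by
      rw [hβ, ← PowerSeries.coeff_zero_eq_constantCoeff_apply, PowerSeries.coeff_mk]
    rw [h2, PowerSeries.coeff_zero_eq_constantCoeff_apply, h1]
  · ext k
    rw [← sub_eq_zero, ← map_sub]
    have h1 : (PowerSeries.X : PowerSeries K₀) ^ (k + 1)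
        ∣ Algebra.norm (PowerSeries K₀) β - Algebra.norm (PowerSeries K₀)
            (normSeq K₀ L₀ τ f (k + 1)) :=
      norm_sub_dvd b halg _ _ _ (hstab k)
    have h2 := (normSeq_spec b halg τ hτ f hf (k + 1)).1
    have h3 : (PowerSeries.X : PowerSeries K₀) ^ (k + 1)
        ∣ Algebra.norm (PowerSeries K₀) β - f := by
      have : Algebra.norm (PowerSeries K₀) β - f
          = (Algebra.norm (PowerSeries K₀) β
              - Algebra.norm (PowerSeries K₀) (normSeq K₀ L₀ τ f (k + 1)))
            + (Algebra.norm (PowerSeries K₀) (normSeq K₀ L₀ τ f (k + 1)) - f) := by ring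
      rw [this]
      exact dvd_add h1 (dvd_trans (pow_dvd_pow _ (by omega)) h2)
    rw [PowerSeries.X_pow_dvd_iff] at h3
    exact h3 k (by omega)

end PS
section Main

variable {K₀ L₀ : Type*} [Field K₀] [Field L₀] [Algebra K₀ L₀]
  [FiniteDimensional K₀ L₀] [Algebra.IsSeparable K₀ L₀]

/-- Solvability of the norm equation for principal units of Laurent series fields. -/
lemma laurent_norm_surjective_aux
    (σ : LaurentSeries K₀ →+* LaurentSeries L₀)
    (hσ : ∀ f : PowerSeries K₀,
      σ (f : LaurentSeries K₀) = ((PowerSeries.map (algebraMap K₀ L₀) f : PowerSeries L₀) :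
        LaurentSeries L₀))
    (f : PowerSeries K₀) (hf : PowerSeries.constantCoeff f = 1) :
    ∃ x : PowerSeries L₀, PowerSeries.constantCoeff x = 1 ∧
      @Algebra.norm (LaurentSeries K₀) (LaurentSeries L₀) _ _ σ.toAlgebra
        ((x : PowerSeries L₀) : LaurentSeries L₀) = (f : LaurentSeries K₀) := by
  classical
  letI : Algebra (PowerSeries K₀) (PowerSeries L₀) :=
    (PowerSeries.map (algebraMap K₀ L₀)).toAlgebra
  have halg : algebraMap (PowerSeries K₀) (PowerSeries L₀)
      = PowerSeries.map (algebraMap K₀ L₀) := rfl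
  letI : Algebra (LaurentSeries K₀) (LaurentSeries L₀) := σ.toAlgebra
  letI : Algebra (PowerSeries K₀) (LaurentSeries L₀) :=
    (σ.comp (algebraMap (PowerSeries K₀) (LaurentSeries K₀))).toAlgebra
  haveI t1 : IsScalarTower (PowerSeries K₀) (LaurentSeries K₀) (LaurentSeries L₀) :=
    IsScalarTower.of_algebraMap_eq' rfl
  haveI t2 : IsScalarTower (PowerSeries K₀) (PowerSeries L₀) (LaurentSeries L₀) :=
    IsScalarTower.of_algebraMap_eq' (RingHom.ext fun g => hσ g)
  haveI moo : IsLocalization (Algebra.algebraMapSubmonoid (PowerSeries L₀)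
      (Submonoid.powers (PowerSeries.X : PowerSeries K₀))) (LaurentSeries L₀) := by
    have heq : Algebra.algebraMapSubmonoid (PowerSeries L₀)
        (Submonoid.powers (PowerSeries.X : PowerSeries K₀))
        = Submonoid.powers (PowerSeries.X : PowerSeries L₀) := by
      rw [Algebra.algebraMapSubmonoid, Submonoid.map_powers]
      congr 1
      rw [halg, PowerSeries.map_X]
    rw [heq]
    infer_instance
  set b := Module.finBasis K₀ L₀ with hb
  haveI : Module.Free (PowerSeries K₀) (PowerSeries L₀) := Module.Free.of_basis (psBasis b halg)
  haveI : Module.Finite (PowerSeries K₀) (PowerSeries L₀) :=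
    Module.Finite.of_basis (psBasis b halg)
  obtain ⟨x, hx1, hxnorm⟩ := ps_exists_norm_eq (K₀ := K₀) (L₀ := L₀) halg f hf
  refine ⟨x, hx1, ?_⟩
  have h1 := Algebra.norm_localization (Rₘ := LaurentSeries K₀) (Sₘ := LaurentSeries L₀)
    (PowerSeries K₀) (Submonoid.powers (PowerSeries.X : PowerSeries K₀)) x
  rw [hxnorm] at h1
  exact h1

end Main

/-- Let `K₀` be a field, `L₀/K₀` finite separable, `K = K₀((t))`,
`L = L₀((t))` (with `L/K` via the coefficientwise embedding `σ`).  Let `U_q^1(K)` be the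
subgroup of `K_{q+1}^M(K)` generated by symbols `{x₁, …, x_{q+1}}` with
`x₁ ∈ 1 + t·K₀[[t]]`.  Given the Milnor norm map `N : K_{q+1}^M(L) → K_{q+1}^M(K)`
satisfying the projection formula (norms of symbols whose last `q` entries come from `K`
are computed by the field norm on the first entry), we have `U_q^1(K) ⊆ N_{q+1}(L/K)`,
i.e. every element of `U_q^1(K)` is in the image of `N`. -/
theorem u1_subset_norm_group_laurent
    (q : ℕ) (K₀ L₀ : Type*) [Field K₀] [Field L₀] [Algebra K₀ L₀]
    [FiniteDimensional K₀ L₀] [Algebra.IsSeparable K₀ L₀]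
    (σ : LaurentSeries K₀ →+* LaurentSeries L₀)
    (hσ : ∀ f : PowerSeries K₀,
      σ (f : LaurentSeries K₀) = ((PowerSeries.map (algebraMap K₀ L₀) f : PowerSeries L₀) :
        LaurentSeries L₀))
    (N : MilnorK (LaurentSeries L₀) (q + 1) →+ MilnorK (LaurentSeries K₀) (q + 1))
    (hproj : ∀ (β : (LaurentSeries L₀)ˣ) (a : Fin q → (LaurentSeries K₀)ˣ),
      N (MilnorK.symbol (Fin.cons β (fun i => Units.map (σ : LaurentSeries K₀ →* LaurentSeries L₀) (a i))))
        = MilnorK.symbol (Fin.cons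
            (Units.map (letI : Algebra (LaurentSeries K₀) (LaurentSeries L₀) := σ.toAlgebra
              (Algebra.norm (LaurentSeries K₀) : LaurentSeries L₀ →* LaurentSeries K₀)) β) a)) :
    ∀ γ ∈ AddSubgroup.closure
        {γ : MilnorK (LaurentSeries K₀) (q + 1) |
          ∃ (u : (LaurentSeries K₀)ˣ) (rest : Fin q → (LaurentSeries K₀)ˣ)
            (f : PowerSeries K₀), PowerSeries.constantCoeff f = 1 ∧
            (u : LaurentSeries K₀) = (f : LaurentSeries K₀) ∧
            γ = MilnorK.symbol (Fin.cons u rest)},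
      γ ∈ Set.range N := by
  intro γ hγ
  have hsub : AddSubgroup.closure
      {γ : MilnorK (LaurentSeries K₀) (q + 1) |
        ∃ (u : (LaurentSeries K₀)ˣ) (rest : Fin q → (LaurentSeries K₀)ˣ)
          (f : PowerSeries K₀), PowerSeries.constantCoeff f = 1 ∧
          (u : LaurentSeries K₀) = (f : LaurentSeries K₀) ∧
          γ = MilnorK.symbol (Fin.cons u rest)} ≤ N.range := by
    rw [AddSubgroup.closure_le]
    rintro γ' ⟨u, rest, f, hf1, hfu, rfl⟩
    obtain ⟨x, hx1, hxnorm⟩ := laurent_norm_surjective_aux σ hσ f hf1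
    have hxne : ((x : PowerSeries L₀) : LaurentSeries L₀) ≠ 0 := by
      intro h
      have hx0 : x = 0 := (HahnSeries.ofPowerSeries_injective (Γ := ℤ) (R := L₀) (by rw [map_zero]; exact h))
      rw [hx0, map_zero] at hx1
      exact one_ne_zero hx1.symm
    set β : (LaurentSeries L₀)ˣ := Units.mk0 _ hxne with hβ
    have hnorm : (Units.map (letI : Algebra (LaurentSeries K₀) (LaurentSeries L₀) := σ.toAlgebra
        (Algebra.norm (LaurentSeries K₀) : LaurentSeries L₀ →* LaurentSeries K₀)) β) = u := by
      apply Units.ext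
      rw [Units.coe_map]
      show @Algebra.norm (LaurentSeries K₀) (LaurentSeries L₀) _ _ σ.toAlgebra
        ((x : PowerSeries L₀) : LaurentSeries L₀) = (u : LaurentSeries K₀)
      rw [hfu]
      exact hxnorm
    have hkey := hproj β rest
    rw [hnorm] at hkey
    exact ⟨_, hkey⟩
  exact hsub hγ
end
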